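/- arXiv:1811.01456 — 8 statements merged into one kernel-verified Lean document; each statement's English description precedes it below -/
import Mathlib

section
/- For uniformities 𝒰 and 𝒱 on a set S, the join 𝒰 ∨ 𝒱 in the lattice of uniformities equals the filter 𝒰 ∘ 𝒱 if and only if 𝒰 and 𝒱 permute, i.e., 𝒰 ∘ 𝒱 = 𝒱 ∘ 𝒰. -/
open Filter Set

variable {α : Type*}

/-- A uniformity on a set. -/
def IsUniformity (𝒰 : Filter (α × α)) : Prop :=
  (∀ U ∈ 𝒰, SetRel.id ⊆ U) ∧ (∀ U ∈ 𝒰, Prod.swap ⁻¹' U ∈ 𝒰) ∧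
    (∀ U ∈ 𝒰, ∃ V ∈ 𝒰, SetRel.comp V V ⊆ U)

/-- Composition of filters of relations. -/
def fComp (F G : Filter (α × α)) : Filter (α × α) :=
  F.lift fun U => G.lift' fun V => SetRel.comp U V

/-- The join of two uniformities in the complete lattice of uniformities:
the least uniformity above both (the meet of all uniformities above both). -/
def uJoin (𝒰 𝒱 : Filter (α × α)) : Filter (α × α) :=
  sInf {𝒲 | IsUniformity 𝒲 ∧ 𝒰 ≤ 𝒲 ∧ 𝒱 ≤ 𝒲}

lemma mem_fComp {F G : Filter (α × α)} {W : Set (α × α)} :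
    W ∈ fComp F G ↔ ∃ U ∈ F, ∃ V ∈ G, SetRel.comp U V ⊆ W := by
  have hmono : Monotone fun U : Set (α × α) => G.lift' fun V => SetRel.comp U V := by
    intro a b hab
    exact Filter.lift'_mono le_rfl fun V => SetRel.comp_subset_comp hab Subset.rfl
  rw [fComp, Filter.mem_lift_sets hmono]
  refine exists_congr fun U => and_congr_right fun _ => ?_
  exact Filter.mem_lift'_sets (monotone_const.relComp monotone_id)

lemma swap_preimage_compRel (A B : Set (α × α)) :
    Prod.swap ⁻¹' (SetRel.comp A B) = SetRel.comp (Prod.swap ⁻¹' B) (Prod.swap ⁻¹' A) := by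
  ext ⟨x, y⟩
  constructor
  · rintro ⟨z, hz1, hz2⟩
    exact ⟨z, hz2, hz1⟩
  · rintro ⟨z, hz1, hz2⟩
    exact ⟨z, hz2, hz1⟩

lemma comap_swap_eq {𝒲 : Filter (α × α)} (h : IsUniformity 𝒲) :
    Filter.comap Prod.swap 𝒲 = 𝒲 := by
  apply le_antisymm
  · intro W hW
    exact ⟨Prod.swap ⁻¹' W, h.2.1 W hW, by
      simp [preimage_preimage, Prod.swap_swap_eq]⟩
  · rintro W ⟨t, ht, hts⟩
    exact Filter.mem_of_superset (h.2.1 t ht) hts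

/-- Permuting fComp corresponds to comap by swap. -/
lemma mem_fComp_swap {𝒰 𝒱 : Filter (α × α)} (hU : IsUniformity 𝒰) (hV : IsUniformity 𝒱)
    {W : Set (α × α)} : Prod.swap ⁻¹' W ∈ fComp 𝒰 𝒱 ↔ W ∈ fComp 𝒱 𝒰 := by
  rw [mem_fComp, mem_fComp]
  constructor
  · rintro ⟨U, hUm, V, hVm, hc⟩
    refine ⟨Prod.swap ⁻¹' V, hV.2.1 V hVm, Prod.swap ⁻¹' U, hU.2.1 U hUm, ?_⟩
    rw [← swap_preimage_compRel]
    intro p hp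
    have h1 : p.swap ∈ SetRel.comp U V := hp
    have h2 : p.swap ∈ Prod.swap ⁻¹' W := hc h1
    simpa using h2
  · rintro ⟨V, hVm, U, hUm, hc⟩
    refine ⟨Prod.swap ⁻¹' U, hU.2.1 U hUm, Prod.swap ⁻¹' V, hV.2.1 V hVm, ?_⟩
    rw [← swap_preimage_compRel]
    exact preimage_mono hc

theorem stmt2 (𝒰 𝒱 : Filter (α × α)) (hU : IsUniformity 𝒰) (hV : IsUniformity 𝒱) :
    uJoin 𝒰 𝒱 = fComp 𝒰 𝒱 ↔ fComp 𝒰 𝒱 = fComp 𝒱 𝒰 := by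
  -- basic facts
  have hUle : 𝒰 ≤ fComp 𝒰 𝒱 := by
    intro W hW
    rcases mem_fComp.mp hW with ⟨U, hUm, V, hVm, hc⟩
    refine Filter.mem_of_superset hUm (subset_trans ?_ hc)
    intro ⟨x, y⟩ hxy
    exact ⟨y, hxy, hV.1 V hVm rfl⟩
  have hVle : 𝒱 ≤ fComp 𝒰 𝒱 := by
    intro W hW
    rcases mem_fComp.mp hW with ⟨U, hUm, V, hVm, hc⟩
    refine Filter.mem_of_superset hVm (subset_trans ?_ hc)
    intro ⟨x, y⟩ hxy
    exact ⟨x, hU.1 U hUm rfl, hxy⟩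
  -- fComp 𝒰 𝒱 is finer than every uniformity coarser than both
  have hlb : ∀ 𝒲 ∈ {𝒲 | IsUniformity 𝒲 ∧ 𝒰 ≤ 𝒲 ∧ 𝒱 ≤ 𝒲}, fComp 𝒰 𝒱 ≤ 𝒲 := by
    rintro 𝒲 ⟨hW, hUW, hVW⟩ W hWm
    rcases hW.2.2 W hWm with ⟨W', hW'm, hW'c⟩
    exact mem_fComp.mpr ⟨W', hUW hW'm, W', hVW hW'm, hW'c⟩
  constructor
  · -- join = comp → permute
    intro h
    -- fComp 𝒰 𝒱 is symmetric since uJoin is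
    have hsymm : ∀ W ∈ fComp 𝒰 𝒱, Prod.swap ⁻¹' W ∈ fComp 𝒰 𝒱 := by
      have hcom : Filter.comap Prod.swap (uJoin 𝒰 𝒱) = uJoin 𝒰 𝒱 := by
        rw [uJoin, sInf_eq_iInf, Filter.comap_iInf]
        refine iInf_congr fun 𝒲 => ?_
        rw [Filter.comap_iInf]
        exact iInf_congr fun h𝒲 => comap_swap_eq h𝒲.1
      rw [h] at hcom
      intro W hW
      rw [← hcom] at hW
      rcases hW with ⟨t, ht, hts⟩
      refine Filter.mem_of_superset ht ?_
      intro p hp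
      have : p.swap ∈ Prod.swap ⁻¹' t := by simpa using hp
      exact hts this
    ext W
    rw [← mem_fComp_swap hU hV]
    constructor
    · intro hW
      exact hsymm W hW
    · intro hW
      have := hsymm _ hW
      simpa [preimage_preimage, Prod.swap_swap_eq] using this
  · -- permute → join = comp
    intro hcomm
    -- fComp 𝒰 𝒱 is a uniformity
    have hC : IsUniformity (fComp 𝒰 𝒱) := by
      refine ⟨?_, ?_, ?_⟩
      · intro W hW
        rcases mem_fComp.mp hW with ⟨U, hUm, V, hVm, hc⟩
        intro p hp
        rcases p with ⟨x, y⟩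
        cases hp
        exact hc ⟨x, hU.1 U hUm rfl, hV.1 V hVm rfl⟩
      · intro W hW
        rw [mem_fComp_swap hU hV, ← hcomm]
        exact hW
      · intro W hW
        rcases mem_fComp.mp hW with ⟨U, hUm, V, hVm, hc⟩
        rcases hU.2.2 U hUm with ⟨U', hU'm, hU'c⟩
        rcases hV.2.2 V hVm with ⟨V', hV'm, hV'c⟩
        -- U' ○ V' ∈ fComp 𝒰 𝒱 = fComp 𝒱 𝒰, so some V'' ○ U'' ⊆ U' ○ V'
        have hmem : SetRel.comp U' V' ∈ fComp 𝒱 𝒰 := by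
          rw [← hcomm]
          exact mem_fComp.mpr ⟨U', hU'm, V', hV'm, Subset.rfl⟩
        rcases mem_fComp.mp hmem with ⟨V'', hV''m, U'', hU''m, hc2⟩
        refine ⟨SetRel.comp (U' ∩ U'') (V' ∩ V''),
          mem_fComp.mpr ⟨U' ∩ U'', Filter.inter_mem hU'm hU''m,
            V' ∩ V'', Filter.inter_mem hV'm hV''m, Subset.rfl⟩, ?_⟩
        refine subset_trans ?_ hc
        rintro ⟨x, y⟩ ⟨z, ⟨w, hxw, hwz⟩, ⟨v, hzv, hvy⟩⟩
        -- (w,v) ∈ (V'∩V'') ○ (U'∩U'') ⊆ V'' ○ U'' ⊆ U' ○ V'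
        have hwv : (w, v) ∈ SetRel.comp U' V' :=
          hc2 ⟨z, hwz.2, hzv.2⟩
        rcases hwv with ⟨m, hwm, hmv⟩
        exact ⟨m, hU'c ⟨w, hxw.1, hwm⟩, hV'c ⟨v, hmv, hvy.1⟩⟩
    apply le_antisymm
    · exact sInf_le ⟨hC, hUle, hVle⟩
    · exact le_sInf hlb
end

section
/- Let 𝒮 be a semiuniformity on a set S. Then the sets [Uₙ : n ∈ ℕ₊] = ⋃_{n≥1} ⋃_{γ ∈ Γₙ} U_{γ(1)} ∘ ⋯ ∘ U_{γ(n)}, where each Uₙ ∈ 𝒮 and Γₙ is the set of permutations of {1,…,n}, form a base for the smallest uniformity containing 𝒮 (i.e., contained in 𝒮 as a set of relations, under the reverse-inclusion ordering). -/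
open Filter Set

variable {α : Type*}

/-- A semiuniformity: a filter of reflexive relations closed under inverses. -/
def IsSemiUniformity (𝒮 : Filter (α × α)) : Prop :=
  (∀ U ∈ 𝒮, SetRel.id ⊆ U) ∧ (∀ U ∈ 𝒮, Prod.swap ⁻¹' U ∈ 𝒮)

/-- The uniformity generated by a filter of relations: the meet of all
uniformities above it (in the Mathlib filter order, which is the
reverse-inclusion order of the paper). -/
def Ug (𝒮 : Filter (α × α)) : Filter (α × α) :=
  sInf {𝒰 | IsUniformity 𝒰 ∧ 𝒮 ≤ 𝒰}

/-- `B` is a base for the filter `F`. -/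
def IsBaseOf (B : Set (Set (α × α))) (F : Filter (α × α)) : Prop :=
  B ⊆ F.sets ∧ ∀ U ∈ F, ∃ V ∈ B, V ⊆ U

/-- Composition of a nonempty list of relations (empty list gives the diagonal). -/
def listComp : List (Set (α × α)) → Set (α × α)
  | [] => SetRel.id
  | [R] => R
  | R :: S :: l => SetRel.comp R (listComp (S :: l))

/-- Weber's relation `[Uₙ : n ∈ ℕ₊]`: the union over `n` and over permutations
`γ` of `{0,…,n}` of the compositions `U_{γ 0} ∘ ⋯ ∘ U_{γ n}`. -/
def weber (U : ℕ → Set (α × α)) : Set (α × α) :=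
  ⋃ n : ℕ, ⋃ γ : Equiv.Perm (Fin (n + 1)),
    listComp (List.ofFn fun i : Fin (n + 1) => U ((γ i) : ℕ))

/-! ### Auxiliary lemmas about `listComp` -/

lemma compRel_idRel' (R : Set (α × α)) : SetRel.comp R SetRel.id = R := by
  ext ⟨a, b⟩
  constructor
  · rintro ⟨z, hz, hz'⟩
    have : z = b := hz'
    subst this; exact hz
  · intro hab; exact ⟨b, hab, rfl⟩

lemma listComp_cons (R : Set (α × α)) (l : List (Set (α × α))) :
    listComp (R :: l) = SetRel.comp R (listComp l) := by
  cases l with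
  | nil => simp [listComp, compRel_idRel']
  | cons S t => rfl

lemma listComp_append (a b : List (Set (α × α))) :
    listComp (a ++ b) = SetRel.comp (listComp a) (listComp b) := by
  induction a with
  | nil => simp [listComp, SetRel.id_comp]
  | cons R t ih => rw [List.cons_append, listComp_cons, ih, listComp_cons, SetRel.comp_assoc]

lemma listComp_mono : ∀ {l l' : List (Set (α × α))},
    List.Forall₂ (· ⊆ ·) l l' → listComp l ⊆ listComp l' := by
  intro l l' h
  induction h with
  | nil => exact subset_rfl
  | cons hR hl ih => rw [listComp_cons, listComp_cons]; exact SetRel.comp_subset_comp hR ih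

lemma listComp_sublist {l l' : List (Set (α × α))} (h : List.Sublist l l')
    (href : ∀ R ∈ l', SetRel.id ⊆ R) : listComp l ⊆ listComp l' := by
  induction h with
  | slnil => exact subset_rfl
  | cons R h ih =>
    rw [listComp_cons]
    exact (ih fun S hS => href S (List.mem_cons_of_mem _ hS)).trans
      (by rintro ⟨a, b⟩ hp; exact ⟨a, href R List.mem_cons_self rfl, hp⟩)
  | cons_cons R h ih =>
    rw [listComp_cons, listComp_cons]
    exact SetRel.comp_subset_comp subset_rfl (ih fun S hS => href S (List.mem_cons_of_mem _ hS))

lemma swap_compRel (r s : Set (α × α)) :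
    Prod.swap ⁻¹' (SetRel.comp r s) = SetRel.comp (Prod.swap ⁻¹' s) (Prod.swap ⁻¹' r) := by
  ext ⟨a, b⟩
  constructor
  · rintro ⟨z, hz1, hz2⟩
    exact ⟨z, hz2, hz1⟩
  · rintro ⟨z, hz1, hz2⟩
    exact ⟨z, hz2, hz1⟩

lemma swap_listComp (l : List (Set (α × α))) :
    Prod.swap ⁻¹' (listComp l) = listComp ((l.map (Prod.swap ⁻¹' ·)).reverse) := by
  induction l with
  | nil =>
    show Prod.swap ⁻¹' SetRel.id = SetRel.id
    ext ⟨a, b⟩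
    simp [SetRel.id, eq_comm]
  | cons R t ih =>
    rw [listComp_cons, swap_compRel, ih, List.map_cons, List.reverse_cons, listComp_append]
    congr 1

/-! ### Auxiliary lemmas about `weber` -/

lemma subset_weber (U : ℕ → Set (α × α)) (n : ℕ) (γ : Equiv.Perm (Fin (n + 1))) :
    listComp (List.ofFn fun i : Fin (n + 1) => U ((γ i) : ℕ)) ⊆ weber U :=
  Set.subset_iUnion₂ (s := fun n (γ : Equiv.Perm (Fin (n + 1))) =>
    listComp (List.ofFn fun i : Fin (n + 1) => U ((γ i) : ℕ))) n γ

lemma zero_subset_weber (U : ℕ → Set (α × α)) : U 0 ⊆ weber U := by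
  have h := subset_weber U 0 (Equiv.refl _)
  simpa [listComp, List.ofFn_succ] using h

lemma forall₂_ofFn {n : ℕ} {R : Set (α × α) → Set (α × α) → Prop}
    {f g : Fin n → Set (α × α)} (h : ∀ i, R (f i) (g i)) :
    List.Forall₂ R (List.ofFn f) (List.ofFn g) := by
  induction n with
  | zero => simp
  | succ n ih =>
    rw [List.ofFn_succ, List.ofFn_succ]
    exact List.Forall₂.cons (h 0) (ih fun i => h i.succ)

lemma weber_mono {U V : ℕ → Set (α × α)} (h : ∀ n, U n ⊆ V n) : weber U ⊆ weber V := by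
  refine Set.iUnion₂_subset fun n γ => ?_
  exact (listComp_mono (forall₂_ofFn fun i => h _)).trans (subset_weber V n γ)

/-- Any `Nodup` list of naturals permuting `{0,…,n}` arises from a permutation. -/
lemma exists_perm_ofFn {l : List ℕ} {n : ℕ} (hnd : l.Nodup) (hp : List.Perm l (List.range (n + 1))) :
    ∃ γ : Equiv.Perm (Fin (n + 1)), (List.ofFn fun i => ((γ i : ℕ))) = l := by
  have hlen : l.length = n + 1 := by simpa using hp.length_eq
  have hmem : ∀ x ∈ l, x < n + 1 := fun x hx => List.mem_range.mp (hp.subset hx)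
  have hget : ∀ (i : ℕ) (hi : i < l.length), l[i] < n + 1 :=
    fun i hi => hmem _ (List.getElem_mem _)
  let f : Fin (n + 1) → Fin (n + 1) := fun i => ⟨l[(i : ℕ)]'(by omega), hget _ _⟩
  have hinj : Function.Injective f := by
    intro i j hij
    have hginj := List.nodup_iff_injective_get.mp hnd
    have h2 : l.get ⟨i, by omega⟩ = l.get ⟨j, by omega⟩ := by
      simpa [f, List.get_eq_getElem] using congrArg Fin.val hij
    have := hginj h2
    exact Fin.ext (by simpa using congrArg Fin.val this)
  refine ⟨Equiv.ofBijective f (Finite.injective_iff_bijective.mp hinj), ?_⟩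
  apply List.ext_getElem (by simpa using hlen.symm)
  intro i h1 h2
  rw [List.getElem_ofFn]
  rfl

/-- The composition along any `Nodup` list of indices is contained in `weber U`. -/
lemma listComp_map_subset_weber (U : ℕ → Set (α × α)) (href : ∀ n, SetRel.id ⊆ U n)
    {l : List ℕ} (hl : l.Nodup) : listComp (l.map U) ⊆ weber U := by
  rcases eq_or_ne l [] with rfl | hne
  · exact (href 0).trans (zero_subset_weber U)
  obtain ⟨N, hN⟩ := l.toFinset.exists_nat_subset_range
  have hlt : ∀ x ∈ l, x < N := fun x hx => Finset.mem_range.mp (hN (List.mem_toFinset.mpr hx))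
  obtain ⟨x, hx⟩ := List.exists_mem_of_ne_nil l hne
  cases N with
  | zero => exact absurd (hlt x hx) (by omega)
  | succ m =>
    classical
    set l' := l ++ (List.range (m + 1)).filter (fun y => ¬ y ∈ l) with hl'def
    have hsub : List.Sublist l l' := List.sublist_append_left _ _
    have hnd' : l'.Nodup := by
      refine List.Nodup.append hl (List.nodup_range.filter _) ?_
      intro a ha ha'
      simp only [List.mem_filter, decide_eq_true_eq] at ha'
      exact ha'.2 ha
    have hperm : List.Perm l' (List.range (m + 1)) := by
      refine (List.perm_ext_iff_of_nodup hnd' List.nodup_range).mpr fun a => ?_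
      simp only [hl'def, List.mem_append, List.mem_filter, List.mem_range, decide_eq_true_eq]
      constructor
      · rintro (h | ⟨h, _⟩)
        · exact hlt a h
        · exact h
      · intro h
        by_cases hal : a ∈ l
        · exact Or.inl hal
        · exact Or.inr ⟨h, hal⟩
    obtain ⟨γ, hγ⟩ := exists_perm_ofFn hnd' hperm
    have hmap : l'.map U = List.ofFn fun i : Fin (m + 1) => U ((γ i : ℕ)) := by
      rw [← hγ, List.map_ofFn]; rfl
    refine (listComp_sublist (hsub.map U) ?_).trans ?_
    · intro R hR
      obtain ⟨y, -, rfl⟩ := List.mem_map.mp hR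
      exact href y
    · rw [hmap]
      exact subset_weber U m γ

/-- The chain lemma: compositions along `Nodup` lists of indices above `m` land in `W m`. -/
lemma chain_lemma (W : ℕ → Set (α × α)) (href : ∀ k, SetRel.id ⊆ W k)
    (h3 : ∀ k, SetRel.comp (W (k + 1)) (SetRel.comp (W (k + 1)) (W (k + 1))) ⊆ W k) :
    ∀ (l : List ℕ), l.Nodup → ∀ m, (∀ x ∈ l, m < x) → listComp (l.map W) ⊆ W m := by
  have hstep : ∀ j, W (j + 1) ⊆ W j := by
    intro j
    rintro ⟨a, b⟩ hab
    exact h3 j ⟨a, href _ rfl, ⟨a, href _ rfl, hab⟩⟩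
  have hmono : ∀ j k, k ≤ j → W j ⊆ W k := by
    intro j k hkj
    induction j, hkj using Nat.le_induction with
    | base => exact subset_rfl
    | succ j hj ih => exact (hstep j).trans ih
  suffices H : ∀ (N : ℕ) (l : List ℕ), l.length ≤ N → l.Nodup →
      ∀ m, (∀ x ∈ l, m < x) → listComp (l.map W) ⊆ W m by
    intro l hl m hm; exact H l.length l le_rfl hl m hm
  intro N
  induction N with
  | zero =>
    intro l hl hnd m hm
    have : l = [] := List.length_eq_zero_iff.mp (Nat.le_zero.mp hl)
    subst this
    exact href m
  | succ N ihN =>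
    rintro (_ | ⟨x0, l0⟩) hl hnd m hm
    · exact href m
    obtain ⟨n, hn_mem, hn_min⟩ : ∃ n ∈ x0 :: l0, ∀ x ∈ x0 :: l0, n ≤ x := by
      classical
      have hs : (x0 :: l0).toFinset.Nonempty := ⟨x0, by simp⟩
      exact ⟨(x0 :: l0).toFinset.min' hs,
        List.mem_toFinset.mp (Finset.min'_mem _ hs),
        fun x hx => Finset.min'_le _ x (List.mem_toFinset.mpr hx)⟩
    obtain ⟨a, b, hab⟩ := List.append_of_mem hn_mem
    rw [hab] at hnd hm hl ⊢
    simp only [List.nodup_append, List.nodup_cons] at hnd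
    obtain ⟨ha, ⟨hnb, hb⟩, hdisj⟩ := hnd
    have hn_m : m < n := hm n (by simp)
    have hlen : a.length + (b.length + 1) ≤ N + 1 := by
      simpa [List.length_append] using hl
    have hagt : ∀ x ∈ a, n < x := by
      intro x hx
      have h1 : n ≤ x := hn_min x (by rw [hab]; exact List.mem_append_left _ hx)
      rcases h1.lt_or_eq with h | h
      · exact h
      · subst h
        exact absurd (List.mem_cons_self : n ∈ n :: b) (fun hc => hdisj _ hx _ hc rfl)
    have hbgt : ∀ x ∈ b, n < x := by
      intro x hx
      have h1 : n ≤ x := hn_min x (by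
        rw [hab]; exact List.mem_append_right _ (List.mem_cons_of_mem _ hx))
      rcases h1.lt_or_eq with h | h
      · exact h
      · exact absurd hx (by rw [← h]; exact hnb)
    rw [List.map_append, List.map_cons, listComp_append, listComp_cons]
    have hA : listComp (a.map W) ⊆ W n := ihN a (by omega) ha n hagt
    have hB : listComp (b.map W) ⊆ W n := ihN b (by omega) hb n hbgt
    have hcomp : SetRel.comp (listComp (a.map W)) (SetRel.comp (W n) (listComp (b.map W))) ⊆
        SetRel.comp (W n) (SetRel.comp (W n) (W n)) :=
      SetRel.comp_subset_comp hA (SetRel.comp_subset_comp subset_rfl hB)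
    refine hcomp.trans ?_
    obtain ⟨k, rfl⟩ : ∃ k, n = k + 1 := ⟨n - 1, by omega⟩
    exact (h3 k).trans (hmono k m (by omega))

/-- Symmetry of weber sets. -/
lemma weber_swap (U : ℕ → Set (α × α)) (href : ∀ n, SetRel.id ⊆ U n) :
    weber (fun n => Prod.swap ⁻¹' U n) ⊆ Prod.swap ⁻¹' weber U := by
  refine Set.iUnion₂_subset fun n γ => ?_
  have hkey : Prod.swap ⁻¹'
      (listComp (List.ofFn fun i : Fin (n + 1) => Prod.swap ⁻¹' U ((γ i : ℕ)))) ⊆ weber U := by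
    rw [swap_listComp, List.map_ofFn]
    have heq : ((Prod.swap ⁻¹' ·) ∘ fun i : Fin (n + 1) => Prod.swap ⁻¹' U ((γ i : ℕ)))
        = fun i : Fin (n + 1) => U ((γ i : ℕ)) := by
      funext i; ext ⟨c, d⟩; simp
    rw [heq]
    have h2 : (List.ofFn fun i : Fin (n + 1) => U ((γ i : ℕ))).reverse
        = ((List.ofFn fun i : Fin (n + 1) => ((γ i : ℕ))).reverse).map U := by
      rw [List.map_reverse, List.map_ofFn]; rfl
    rw [h2]
    refine listComp_map_subset_weber U href ?_
    rw [List.nodup_reverse]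
    exact List.nodup_ofFn.mpr (Fin.val_injective.comp γ.injective)
  intro p hp
  have hswap : Prod.swap p ∈ Prod.swap ⁻¹'
      (listComp (List.ofFn fun i : Fin (n + 1) => Prod.swap ⁻¹' U ((γ i : ℕ)))) := by
    simpa [Set.mem_preimage, Prod.swap_swap] using hp
  exact hkey hswap

/-- The square of the even/odd-interleaved weber set is inside `weber U`. -/
lemma weber_comp (U : ℕ → Set (α × α)) (href : ∀ n, SetRel.id ⊆ U n) :
    SetRel.comp (weber fun n => U (2 * n) ∩ U (2 * n + 1))
      (weber fun n => U (2 * n) ∩ U (2 * n + 1)) ⊆ weber U := by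
  set U' : ℕ → Set (α × α) := fun n => U (2 * n) ∩ U (2 * n + 1) with hU'
  rintro ⟨a, c⟩ ⟨b, hab, hbc⟩
  simp only [weber, Set.mem_iUnion] at hab hbc
  obtain ⟨n, γ, hab⟩ := hab
  obtain ⟨m, δ, hbc⟩ := hbc
  have h1 : (a, c) ∈ listComp ((List.ofFn fun i : Fin (n + 1) => U' ((γ i : ℕ)))
      ++ (List.ofFn fun i : Fin (m + 1) => U' ((δ i : ℕ)))) := by
    rw [listComp_append]; exact ⟨b, hab, hbc⟩
  set l : List ℕ := (List.ofFn fun i : Fin (n + 1) => 2 * ((γ i : ℕ)))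
      ++ (List.ofFn fun i : Fin (m + 1) => 2 * ((δ i : ℕ)) + 1) with hldef
  have hmap : l.map U = (List.ofFn fun i : Fin (n + 1) => U (2 * ((γ i : ℕ))))
      ++ (List.ofFn fun i : Fin (m + 1) => U (2 * ((δ i : ℕ)) + 1)) := by
    rw [hldef, List.map_append, List.map_ofFn, List.map_ofFn]; rfl
  have h2 : listComp ((List.ofFn fun i : Fin (n + 1) => U' ((γ i : ℕ)))
      ++ (List.ofFn fun i : Fin (m + 1) => U' ((δ i : ℕ)))) ⊆ listComp (l.map U) := by
    rw [hmap]
    refine listComp_mono (List.rel_append ?_ ?_)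
    · exact forall₂_ofFn fun i => Set.inter_subset_left
    · exact forall₂_ofFn fun i => Set.inter_subset_right
  have hnd : l.Nodup := by
    rw [hldef]
    refine List.Nodup.append ?_ ?_ ?_
    · exact List.nodup_ofFn.mpr (by
        intro i j hij
        have hij' : 2 * ((γ i : ℕ)) = 2 * ((γ j : ℕ)) := hij
        exact γ.injective (Fin.val_injective (by omega)))
    · exact List.nodup_ofFn.mpr (by
        intro i j hij
        have hij' : 2 * ((δ i : ℕ)) + 1 = 2 * ((δ j : ℕ)) + 1 := hij
        exact δ.injective (Fin.val_injective (by omega)))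
    · intro x hx hy
      simp only [List.mem_ofFn, Set.mem_range] at hx hy
      obtain ⟨i, hi⟩ := hx
      obtain ⟨j, hj⟩ := hy
      omega
  exact listComp_map_subset_weber U href hnd (h2 h1)

theorem stmt3 (𝒮 : Filter (α × α)) (h : IsSemiUniformity 𝒮) :
    IsBaseOf {W | ∃ U : ℕ → Set (α × α), (∀ n, U n ∈ 𝒮) ∧ W = weber U} (Ug 𝒮) := by
  obtain ⟨hrefl, hsymm⟩ := h
  set B : Set (Set (α × α)) :=
    {W | ∃ U : ℕ → Set (α × α), (∀ n, U n ∈ 𝒮) ∧ W = weber U} with hBdef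
  set F := Filter.generate B with hFdef
  have hrefU : ∀ (U : ℕ → Set (α × α)), (∀ n, U n ∈ 𝒮) → ∀ n, SetRel.id ⊆ U n :=
    fun U hU n => hrefl _ (hU n)
  have memF : ∀ s : Set (α × α), s ∈ F ↔ ∃ U, (∀ n, U n ∈ 𝒮) ∧ weber U ⊆ s := by
    intro s
    constructor
    · intro hs
      have hs' : Filter.GenerateSets B s := hs
      clear hs
      induction hs' with
      | basic hmem => obtain ⟨U, hU, rfl⟩ := hmem; exact ⟨U, hU, subset_rfl⟩
      | univ => exact ⟨fun _ => Set.univ, fun _ => univ_mem, Set.subset_univ _⟩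
      | superset _ hsub ih =>
        obtain ⟨U, hU, h1⟩ := ih
        exact ⟨U, hU, h1.trans hsub⟩
      | inter _ _ ih1 ih2 =>
        obtain ⟨U, hU, h1⟩ := ih1
        obtain ⟨V, hV, h2⟩ := ih2
        refine ⟨fun n => U n ∩ V n, fun n => inter_mem (hU n) (hV n), ?_⟩
        exact Set.subset_inter
          ((weber_mono fun n => Set.inter_subset_left).trans h1)
          ((weber_mono fun n => Set.inter_subset_right).trans h2)
    · rintro ⟨U, hU, hsub⟩
      exact Filter.mem_of_superset (Filter.GenerateSets.basic ⟨U, hU, rfl⟩ :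
        Filter.GenerateSets B (weber U)) hsub
  have hFuni : IsUniformity F := by
    refine ⟨?_, ?_, ?_⟩
    · intro s hs
      obtain ⟨U, hU, hsub⟩ := (memF s).1 hs
      exact ((hrefU U hU 0).trans (zero_subset_weber U)).trans hsub
    · intro s hs
      obtain ⟨U, hU, hsub⟩ := (memF s).1 hs
      refine (memF _).2 ⟨fun n => Prod.swap ⁻¹' U n, fun n => hsymm _ (hU n), ?_⟩
      exact (weber_swap U (hrefU U hU)).trans (Set.preimage_mono hsub)
    · intro s hs
      obtain ⟨U, hU, hsub⟩ := (memF s).1 hs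
      refine ⟨weber (fun n => U (2 * n) ∩ U (2 * n + 1)),
        (memF _).2 ⟨_, fun n => inter_mem (hU _) (hU _), subset_rfl⟩, ?_⟩
      exact (weber_comp U (hrefU U hU)).trans hsub
  have hSF : 𝒮 ≤ F := by
    intro s hs
    obtain ⟨U, hU, hsub⟩ := (memF s).1 hs
    exact mem_of_superset (hU 0) ((zero_subset_weber U).trans hsub)
  have hUgF : Ug 𝒮 ≤ F := sInf_le ⟨hFuni, hSF⟩
  have hFUg : F ≤ Ug 𝒮 := by
    refine le_sInf ?_
    rintro 𝒰 ⟨⟨hu1, hu2, hu3⟩, hSU⟩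
    intro s hs
    have hchain : ∀ V ∈ 𝒰, ∃ W ∈ 𝒰, SetRel.comp W (SetRel.comp W W) ⊆ V := by
      intro V hV
      obtain ⟨W1, hW1, h1⟩ := hu3 V hV
      obtain ⟨W2, hW2, h2⟩ := hu3 W1 hW1
      have hrW2 : SetRel.id ⊆ W2 := hu1 _ hW2
      have hW2sub : W2 ⊆ W1 := (by rintro ⟨a, b⟩ hp; exact ⟨a, hrW2 rfl, hp⟩ : W2 ⊆ SetRel.comp W2 W2).trans h2
      exact ⟨W2, hW2, (SetRel.comp_subset_comp hW2sub h2).trans h1⟩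
    choose g hg1 hg2 using hchain
    let T : ℕ → {t : Set (α × α) // t ∈ 𝒰} := fun n =>
      Nat.rec ⟨g s hs, hg1 s hs⟩ (fun _ p => ⟨g p.1 p.2, hg1 p.1 p.2⟩) n
    set W : ℕ → Set (α × α) := fun n => (T n).1 with hWdef
    have hWmem : ∀ n, W n ∈ 𝒰 := fun n => (T n).2
    set W' : ℕ → Set (α × α) := fun n => Nat.casesOn n s W with hW'def
    have h3' : ∀ k, SetRel.comp (W' (k + 1)) (SetRel.comp (W' (k + 1)) (W' (k + 1))) ⊆ W' k := by
      intro k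
      cases k with
      | zero => exact hg2 s hs
      | succ k => exact hg2 (W k) (hWmem k)
    have href' : ∀ k, SetRel.id ⊆ W' k := by
      intro k
      cases k with
      | zero => exact hu1 s hs
      | succ k => exact hu1 _ (hWmem k)
    refine (memF s).2 ⟨W, fun n => hSU (hWmem n), ?_⟩
    refine Set.iUnion₂_subset fun n γ => ?_
    have heq : (List.ofFn fun i : Fin (n + 1) => W ((γ i : ℕ)))
        = (List.ofFn fun i : Fin (n + 1) => ((γ i : ℕ) + 1)).map W' := by
      rw [List.map_ofFn]; rfl
    rw [heq]
    refine chain_lemma W' href' h3' _ ?_ 0 ?_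
    · exact List.nodup_ofFn.mpr (by
        intro i j hij
        have hij' : ((γ i : ℕ)) + 1 = ((γ j : ℕ)) + 1 := hij
        exact γ.injective (Fin.val_injective (by omega)))
    · intro x hx
      simp only [List.mem_ofFn, Set.mem_range] at hx
      obtain ⟨i, hi⟩ := hx
      omega
  constructor
  · rintro W ⟨U, hU, rfl⟩
    exact hUgF ((memF _).2 ⟨U, hU, subset_rfl⟩)
  · intro V hV
    obtain ⟨U, hU, hsub⟩ := (memF V).1 (hFUg hV)
    exact ⟨weber U, ⟨U, hU, rfl⟩, hsub⟩
end

section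
/- If A is an algebra and 𝒮 is a compatible semiuniformity on A, then the uniformity generated by 𝒮 is compatible with the operations of A. -/
open Filter Set

variable {α : Type*}

/-- A filter of relations on an algebra (a type `A` with operations `ops`
indexed by a signature) is compatible if for each member `U` and each basic
operation there is a member `V` whose componentwise image lies in `U`. -/
def FilterCompatible {A : Type*} {ι : Type*} (ar : ι → ℕ)
    (ops : ∀ i, (Fin (ar i) → A) → A) (𝒰 : Filter (A × A)) : Prop :=
  ∀ U ∈ 𝒰, ∀ i, ∃ V ∈ 𝒰, ∀ x y : Fin (ar i) → A,
    (∀ k, (x k, y k) ∈ V) → (ops i x, ops i y) ∈ U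

namespace UgAux

open List in
example : True := trivial

variable {A : Type*}

/-- Composition of a list of relations. -/
def chainRel : List (Set (A × A)) → Set (A × A)
  | [] => SetRel.id
  | R :: t => SetRel.comp R (chainRel t)

/-- A symmetric relation. -/
def SymmRel (R : Set (A × A)) : Prop := ∀ a b : A, (a, b) ∈ R → (b, a) ∈ R

lemma chainRel_append (l₁ l₂ : List (Set (A × A))) :
    chainRel (l₁ ++ l₂) = SetRel.comp (chainRel l₁) (chainRel l₂) := by
  induction l₁ with
  | nil =>
    ext ⟨a, b⟩
    simp [chainRel, SetRel.mem_comp, SetRel.id]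
  | cons R t ih =>
    have h0 : chainRel ((R :: t) ++ l₂) = SetRel.comp R (chainRel (t ++ l₂)) := rfl
    rw [h0, ih, ← SetRel.comp_assoc]
    rfl

lemma chainRel_mono : ∀ {l₁ l₂ : List (Set (A × A))}, List.Forall₂ (· ⊆ ·) l₁ l₂ →
    chainRel l₁ ⊆ chainRel l₂ := by
  intro l₁ l₂ h
  induction h with
  | nil => exact subset_rfl
  | cons hR _ ih => exact SetRel.comp_subset_comp hR ih

lemma idRel_subset_chainRel {l : List (Set (A × A))} (h : ∀ R ∈ l, SetRel.id ⊆ R) :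
    SetRel.id ⊆ chainRel l := by
  induction l with
  | nil => exact subset_rfl
  | cons R t ih =>
    rintro ⟨a, b⟩ hab
    rcases SetRel.mem_id.mp hab with rfl
    exact SetRel.mem_comp.mpr ⟨a, h R (List.mem_cons_self) rfl, ih (fun S hS => h S (List.mem_cons_of_mem _ hS)) rfl⟩

lemma chainRel_sublist {l₁ l₂ : List (Set (A × A))} (h : List.Sublist l₁ l₂)
    (hr : ∀ R ∈ l₂, SetRel.id ⊆ R) : chainRel l₁ ⊆ chainRel l₂ := by
  induction h with
  | slnil => exact subset_rfl
  | cons R h ih =>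
    intro p hp
    exact SetRel.mem_comp.mpr ⟨p.1, hr R (List.mem_cons_self) rfl,
      ih (fun S hS => hr S (List.mem_cons_of_mem _ hS)) hp⟩
  | cons_cons R h ih =>
    exact SetRel.comp_subset_comp subset_rfl (ih (fun S hS => hr S (List.mem_cons_of_mem _ hS)))

lemma chainRel_reverse {l : List (Set (A × A))} (h : ∀ R ∈ l, SymmRel R) :
    ∀ a b : A, (a, b) ∈ chainRel l → (b, a) ∈ chainRel l.reverse := by
  induction l with
  | nil => intro a b hab; rcases SetRel.mem_id.mp hab with rfl; exact hab
  | cons R t ih =>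
    intro a b hab
    obtain ⟨z, haz, hzb⟩ := SetRel.mem_comp.mp hab
    have h1 : (b, z) ∈ chainRel t.reverse :=
      ih (fun S hS => h S (List.mem_cons_of_mem _ hS)) z b hzb
    have h2 : (z, a) ∈ chainRel [R] :=
      SetRel.mem_comp.mpr ⟨a, h R (List.mem_cons_self) a z haz, rfl⟩
    rw [List.reverse_cons, chainRel_append]
    exact SetRel.mem_comp.mpr ⟨z, h1, h2⟩

/-- The union, over all duplicate-free lists of indices, of the corresponding
compositions. -/
def blob (U : ℕ → Set (A × A)) : Set (A × A) :=
  ⋃ l : {l : List ℕ // l.Nodup}, chainRel (l.1.map U)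

lemma mem_blob {U : ℕ → Set (A × A)} {p : A × A} :
    p ∈ blob U ↔ ∃ l : List ℕ, l.Nodup ∧ p ∈ chainRel (l.map U) := by
  simp [blob, Set.mem_iUnion, Subtype.exists]

lemma chainRel_subset_blob {U : ℕ → Set (A × A)} {l : List ℕ} (h : l.Nodup) :
    chainRel (l.map U) ⊆ blob U :=
  Set.subset_iUnion (fun l : {l : List ℕ // l.Nodup} => chainRel (l.1.map U)) ⟨l, h⟩

lemma idRel_subset_blob (U : ℕ → Set (A × A)) : SetRel.id ⊆ blob U := by
  intro p hp
  exact mem_blob.mpr ⟨[], List.nodup_nil, hp⟩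

lemma chainRel_map_mono {U W : ℕ → Set (A × A)} (f : ℕ → ℕ)
    (h : ∀ n, W n ⊆ U (f n)) : ∀ l : List ℕ,
    chainRel (l.map W) ⊆ chainRel ((l.map f).map U) := by
  intro l
  induction l with
  | nil => exact subset_rfl
  | cons n t ih => exact SetRel.comp_subset_comp (h n) ih

lemma blob_mono {U U' : ℕ → Set (A × A)} (h : ∀ n, U n ⊆ U' n) : blob U ⊆ blob U' := by
  intro p hp
  obtain ⟨l, hnd, hc⟩ := mem_blob.mp hp
  refine mem_blob.mpr ⟨l, hnd, ?_⟩
  have := chainRel_map_mono (U := U') (W := U) id (fun n => h n) l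
  simpa using this hc

lemma blob_symm {U : ℕ → Set (A × A)} (h : ∀ n, SymmRel (U n)) :
    SymmRel (blob U) := by
  intro a b hab
  obtain ⟨l, hnd, hc⟩ := mem_blob.mp hab
  refine mem_blob.mpr ⟨l.reverse, List.nodup_reverse.mpr hnd, ?_⟩
  have := chainRel_reverse (l := l.map U) ?_ a b hc
  · rw [← List.map_reverse] at this; exact this
  · intro R hR
    obtain ⟨n, _, rfl⟩ := List.mem_map.mp hR
    exact h n

lemma U_zero_subset_blob (U : ℕ → Set (A × A)) (n : ℕ) : U n ⊆ blob U := by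
  intro ⟨a, b⟩ hab
  refine mem_blob.mpr ⟨[n], by simp, ?_⟩
  exact SetRel.mem_comp.mpr ⟨b, hab, rfl⟩

lemma blob_comp_subset {U : ℕ → Set (A × A)} :
    SetRel.comp (blob (fun n => U (2 * n) ∩ U (2 * n + 1)))
      (blob (fun n => U (2 * n) ∩ U (2 * n + 1))) ⊆ blob U := by
  rintro ⟨a, b⟩ hab
  obtain ⟨z, h1, h2⟩ := SetRel.mem_comp.mp hab
  obtain ⟨l₁, hnd₁, hc₁⟩ := mem_blob.mp h1
  obtain ⟨l₂, hnd₂, hc₂⟩ := mem_blob.mp h2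
  have s1 : (a, z) ∈ chainRel ((l₁.map (fun n => 2 * n)).map U) :=
    chainRel_map_mono (fun n => 2 * n) (fun n => Set.inter_subset_left) l₁ hc₁
  have s2 : (z, b) ∈ chainRel ((l₂.map (fun n => 2 * n + 1)).map U) :=
    chainRel_map_mono (fun n => 2 * n + 1) (fun n => Set.inter_subset_right) l₂ hc₂
  refine mem_blob.mpr ⟨l₁.map (fun n => 2 * n) ++ l₂.map (fun n => 2 * n + 1), ?_, ?_⟩
  · refine List.nodup_append.mpr ⟨?_, ?_, ?_⟩
    · exact hnd₁.map (fun m n h => by omega)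
    · exact hnd₂.map (fun m n h => by omega)
    · intro e he1 f he2 hef
      obtain ⟨m, _, rfl⟩ := List.mem_map.mp he1
      obtain ⟨n, _, h⟩ := List.mem_map.mp he2
      omega
  · rw [List.map_append, chainRel_append]
    exact SetRel.mem_comp.mpr ⟨z, s1, s2⟩

/-- The explicit description of the generated uniformity. -/
def U0 (𝒮 : Filter (A × A)) : Filter (A × A) where
  sets := {s | ∃ U : ℕ → Set (A × A), (∀ n, U n ∈ 𝒮 ∧ SymmRel (U n)) ∧ blob U ⊆ s}
  univ_sets := ⟨fun _ => Set.univ, fun _ => ⟨univ_mem, fun _ _ _ => trivial⟩, Set.subset_univ _⟩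
  sets_of_superset := by
    rintro s t ⟨U, hU, hsub⟩ hst
    exact ⟨U, hU, hsub.trans hst⟩
  inter_sets := by
    rintro s t ⟨U, hU, hs⟩ ⟨U', hU', ht⟩
    refine ⟨fun n => U n ∩ U' n, fun n => ⟨inter_mem (hU n).1 (hU' n).1, ?_⟩, ?_⟩
    · rintro a b ⟨h1, h2⟩
      exact ⟨(hU n).2 a b h1, (hU' n).2 a b h2⟩
    · exact Set.subset_inter
        ((blob_mono (fun n => Set.inter_subset_left)).trans hs)
        ((blob_mono (fun n => Set.inter_subset_right)).trans ht)

lemma mem_U0 {𝒮 : Filter (A × A)} {s : Set (A × A)} :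
    s ∈ U0 𝒮 ↔ ∃ U : ℕ → Set (A × A), (∀ n, U n ∈ 𝒮 ∧ SymmRel (U n)) ∧ blob U ⊆ s :=
  Iff.rfl

lemma isUniformity_U0 (𝒮 : Filter (A × A)) : IsUniformity (U0 𝒮) := by
  refine ⟨?_, ?_, ?_⟩
  · rintro s ⟨U, hU, hsub⟩
    exact (idRel_subset_blob U).trans hsub
  · rintro s ⟨U, hU, hsub⟩
    refine mem_U0.mpr ⟨U, hU, ?_⟩
    intro p hp
    have : (p.2, p.1) ∈ blob U := blob_symm (fun n => (hU n).2) p.1 p.2 hp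
    exact hsub this
  · rintro s ⟨U, hU, hsub⟩
    refine ⟨blob (fun n => U (2 * n) ∩ U (2 * n + 1)), ?_, ?_⟩
    · refine mem_U0.mpr ⟨fun n => U (2 * n) ∩ U (2 * n + 1), fun n => ⟨?_, ?_⟩, subset_rfl⟩
      · exact inter_mem (hU _).1 (hU _).1
      · rintro a b ⟨h1, h2⟩
        exact ⟨(hU _).2 a b h1, (hU _).2 a b h2⟩
    · exact blob_comp_subset.trans hsub

lemma le_U0 (𝒮 : Filter (A × A)) : 𝒮 ≤ U0 𝒮 := by
  rintro s ⟨U, hU, hsub⟩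
  exact mem_of_superset (hU 0).1 ((U_zero_subset_blob U 0).trans hsub)

lemma exists_good {𝒰 : Filter (A × A)} (hu : IsUniformity 𝒰) :
    ∀ T ∈ 𝒰, ∃ R, R ∈ 𝒰 ∧ R ⊆ T ∧ SymmRel R ∧ SetRel.comp R (SetRel.comp R R) ⊆ T := by
  intro T hT
  obtain ⟨P, hP, hPP⟩ := hu.2.2 T hT
  obtain ⟨Q, hQ, hQQ⟩ := hu.2.2 P hP
  refine ⟨Q ∩ Prod.swap ⁻¹' Q ∩ (T ∩ Prod.swap ⁻¹' T), ?_, ?_, ?_, ?_⟩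
  · exact inter_mem (inter_mem hQ (hu.2.1 Q hQ)) (inter_mem hT (hu.2.1 T hT))
  · exact fun p hp => hp.2.1
  · rintro a b ⟨⟨h1, h2⟩, h3, h4⟩
    exact ⟨⟨h2, h1⟩, h4, h3⟩
  · rintro ⟨a, b⟩ hab
    obtain ⟨z₁, h1, z₂, h2, h3⟩ := hab
    have hq1 : (a, z₁) ∈ Q := h1.1.1
    have hq2 : (z₁, z₂) ∈ Q := h2.1.1
    have hq3 : (z₂, b) ∈ Q := h3.1.1
    have ha : (a, z₂) ∈ P := hQQ ⟨z₁, hq1, hq2⟩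
    have hb : (z₂, b) ∈ P := hQQ ⟨b, hq3, hu.1 Q hQ rfl⟩
    exact hPP ⟨z₂, ha, hb⟩

lemma U0_le {𝒮 𝒰 : Filter (A × A)} (hu : IsUniformity 𝒰) (hle : 𝒮 ≤ 𝒰) :
    U0 𝒮 ≤ 𝒰 := by
  intro s hs
  classical
  have key := exists_good hu
  let F : Set (A × A) → Set (A × A) := fun T => if h : T ∈ 𝒰 then (key T h).choose else Set.univ
  have hF : ∀ T, T ∈ 𝒰 → F T ∈ 𝒰 ∧ F T ⊆ T ∧ SymmRel (F T) ∧
      SetRel.comp (F T) (SetRel.comp (F T) (F T)) ⊆ T := by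
    intro T h
    simp only [F, dif_pos h]
    exact (key T h).choose_spec
  let V : ℕ → Set (A × A) := fun n => F^[n] s
  have hV : ∀ n, V n ∈ 𝒰 := by
    intro n
    induction n with
    | zero => exact hs
    | succ n ih =>
      show F^[n + 1] s ∈ 𝒰
      rw [Function.iterate_succ_apply']
      exact (hF _ ih).1
  have hVsucc : ∀ n, V (n + 1) = F (V n) := fun n => Function.iterate_succ_apply' F n s
  have hVsub : ∀ n, V (n + 1) ⊆ V n := by
    intro n; rw [hVsucc n]; exact (hF _ (hV n)).2.1
  have hVtriple : ∀ n, SetRel.comp (V (n + 1)) (SetRel.comp (V (n + 1)) (V (n + 1))) ⊆ V n := by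
    intro n; rw [hVsucc n]; exact (hF _ (hV n)).2.2.2
  have hVanti : ∀ m n, m ≤ n → V n ⊆ V m := by
    intro m n h
    induction n with
    | zero => rcases Nat.le_zero.mp h with rfl; exact subset_rfl
    | succ n ih =>
      rcases Nat.eq_or_lt_of_le h with rfl | h'
      · exact subset_rfl
      · exact (hVsub n).trans (ih (Nat.lt_succ_iff.mp h'))
  have main : ∀ N (l : List ℕ), l.length ≤ N → l.Nodup → ∀ m, (∀ i ∈ l, m + 1 ≤ i) →
      chainRel (l.map V) ⊆ V m := by
    intro N
    induction N with
    | zero =>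
      intro l hl _ m _
      rcases List.eq_nil_of_length_eq_zero (Nat.le_zero.mp hl) with rfl
      intro p hp
      exact hu.1 _ (hV m) hp
    | succ N ih =>
      intro l hlen hnd m hge
      rcases eq_or_ne l [] with rfl | hne
      · exact hu.1 _ (hV m)
      · obtain ⟨j, hjm⟩ : ∃ j, l.min? = some j := by
          cases l with
          | nil => exact absurd rfl hne
          | cons a t => exact ⟨_, List.min?_cons'⟩
        rw [List.min?_eq_some_iff'] at hjm
        obtain ⟨hjmem, hjmin⟩ := hjm
        obtain ⟨l₁, l₂, rfl⟩ := List.mem_iff_append.mp hjmem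
        have hnd' := hnd
        rw [List.nodup_append] at hnd'
        obtain ⟨hnd₁, hnd₂', hdisj⟩ := hnd'
        rw [List.nodup_cons] at hnd₂'
        obtain ⟨hjl₂, hnd₂⟩ := hnd₂'
        have hjl₁ : j ∉ l₁ := fun h => hdisj j h j List.mem_cons_self rfl
        have hlen₁ : l₁.length ≤ N := by
          have := hlen; simp [List.length_append] at this; omega
        have hlen₂ : l₂.length ≤ N := by
          have := hlen; simp [List.length_append] at this; omega
        have hge₁ : ∀ i ∈ l₁, j + 1 ≤ i := by
          intro i hi
          have h1 : j ≤ i := hjmin i (by simp [hi])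
          have h2 : i ≠ j := fun h => hjl₁ (h ▸ hi)
          omega
        have hge₂ : ∀ i ∈ l₂, j + 1 ≤ i := by
          intro i hi
          have h1 : j ≤ i := hjmin i (by simp [hi])
          have h2 : i ≠ j := fun h => hjl₂ (h ▸ hi)
          omega
        have hc₁ : chainRel (l₁.map V) ⊆ V j := ih l₁ hlen₁ hnd₁ j hge₁
        have hc₂ : chainRel (l₂.map V) ⊆ V j := ih l₂ hlen₂ hnd₂ j hge₂
        have hjm1 : m + 1 ≤ j := hge j hjmem
        rw [List.map_append, chainRel_append]
        show SetRel.comp (chainRel (l₁.map V)) (chainRel ((j :: l₂).map V)) ⊆ V m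
        have step : SetRel.comp (V j) (SetRel.comp (V j) (V j)) ⊆ V m := by
          have h1 : SetRel.comp (V j) (SetRel.comp (V j) (V j)) ⊆ V (j - 1) := by
            have : j - 1 + 1 = j := by omega
            rw [← this]
            exact hVtriple (j - 1)
          exact h1.trans (hVanti m (j - 1) (by omega))
        refine (SetRel.comp_subset_comp hc₁ (SetRel.comp_subset_comp subset_rfl hc₂)).trans step
  refine mem_U0.mpr ⟨fun n => V (n + 1), fun n => ⟨?_, ?_⟩, ?_⟩
  · exact hle (hV (n + 1))
  · have h1 := (hF _ (hV n)).2.2.1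
    rw [← hVsucc n] at h1
    exact h1
  · intro p hp
    obtain ⟨l, hnd, hc⟩ := mem_blob.mp hp
    have heq : l.map (fun n => V (n + 1)) = (l.map (fun n => n + 1)).map V := by
      rw [List.map_map]; rfl
    rw [heq] at hc
    have : chainRel ((l.map (fun n => n + 1)).map V) ⊆ V 0 := by
      apply main (l.map (fun n => n + 1)).length _ le_rfl
      · exact hnd.map (fun a b h => by omega)
      · intro i hi
        obtain ⟨n, _, rfl⟩ := List.mem_map.mp hi
        omega
    exact this hc

lemma Ug_eq_U0 (𝒮 : Filter (A × A)) : Ug 𝒮 = U0 𝒮 := by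
  refine le_antisymm (sInf_le ⟨isUniformity_U0 𝒮, le_U0 𝒮⟩) ?_
  exact le_sInf fun 𝒰 h => U0_le h.1 h.2

lemma chain_witness {a : ℕ} (op : (Fin a → A) → A) :
    ∀ P : List (Set (A × A) × Set (A × A)),
      (∀ p ∈ P, ∀ x y : Fin a → A, (∀ k, (x k, y k) ∈ p.1) → (op x, op y) ∈ p.2) →
      ∀ x y : Fin a → A, (∀ k, (x k, y k) ∈ chainRel (P.map Prod.fst)) →
        (op x, op y) ∈ chainRel (P.map Prod.snd) := by
  intro P
  induction P with
  | nil =>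
    intro _ x y h
    have : x = y := funext fun k => SetRel.mem_id.mp (h k)
    rw [this]
    rfl
  | cons p t ih =>
    intro hwit x y h
    have h' := fun k => SetRel.mem_comp.mp (h k)
    choose z hz1 hz2 using h'
    refine SetRel.mem_comp.mpr ⟨op z, ?_, ?_⟩
    · exact hwit p (List.mem_cons_self) x z hz1
    · exact ih (fun q hq => hwit q (List.mem_cons_of_mem _ hq)) z y hz2

end UgAux

open UgAux in
theorem stmt4 {A : Type*} {ι : Type*} (ar : ι → ℕ)
    (ops : ∀ i, (Fin (ar i) → A) → A) (𝒮 : Filter (A × A))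
    (hsemi : IsSemiUniformity 𝒮) (hcomp : FilterCompatible ar ops 𝒮) :
    FilterCompatible ar ops (Ug 𝒮) := by
  rw [Ug_eq_U0]
  intro s hs i
  obtain ⟨U, hU, hsub⟩ := mem_U0.mp hs
  set a := ar i with ha
  choose Wit hWit₁ hWit₂ using fun m : ℕ => hcomp (U m) (hU m).1 i
  set Wi : ℕ → Set (A × A) := fun n => ⋂ k : Fin a, Wit (a * n + k) with hWi
  set W : ℕ → Set (A × A) := fun n => Wi n ∩ Prod.swap ⁻¹' Wi n with hW
  have hWimem : ∀ n, Wi n ∈ 𝒮 := fun n => (Filter.iInter_mem).mpr fun k => hWit₁ _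
  have hWmem : ∀ n, W n ∈ 𝒮 := fun n => inter_mem (hWimem n) (hsemi.2 _ (hWimem n))
  have hWsymm : ∀ n, SymmRel (W n) := by
    rintro n u v ⟨h1, h2⟩
    exact ⟨h2, h1⟩
  have hWrefl : ∀ n, SetRel.id ⊆ W n := by
    intro n p hp
    rcases SetRel.mem_id.mp (show (p.1, p.2) ∈ SetRel.id from hp) with h
    have : ∀ T ∈ 𝒮, (p.1, p.2) ∈ T := fun T hT => hsemi.1 T hT (by simpa [SetRel.id] using h)
    exact ⟨this _ (hWimem n), by
      show (p.2, p.1) ∈ Wi n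
      have := hsemi.1 _ (hWimem n) (show (p.2, p.1) ∈ SetRel.id by simpa [SetRel.id] using h.symm)
      exact this⟩
  have hWsub : ∀ n (k : Fin a), W n ⊆ Wit (a * n + k) := fun n k =>
    Set.inter_subset_left.trans (Set.iInter_subset _ k)
  refine ⟨blob W, mem_U0.mpr ⟨W, fun n => ⟨hWmem n, hWsymm n⟩, subset_rfl⟩, ?_⟩
  intro x y hxy
  choose l hnd hchain using fun k => mem_blob.mp (hxy k)
  classical
  set L : List ℕ := ((List.finRange a).map fun k => l k).flatten with hL
  set P : List (Set (A × A) × Set (A × A)) :=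
    ((List.finRange a).map fun k => (l k).map fun n => (W n, U (a * n + k))).flatten with hP
  set T : List ℕ := ((List.finRange a).map fun k => (l k).map fun n => a * n + k.1).flatten with hT
  have hPfst : P.map Prod.fst = L.map W := by
    rw [hP, hL, List.map_flatten, List.map_flatten]
    congr 1
    rw [List.map_map, List.map_map]
    apply List.map_congr_left
    intro k _
    simp [List.map_map, Function.comp_def]
  have hPsnd : P.map Prod.snd = T.map U := by
    rw [hP, hT, List.map_flatten, List.map_flatten]
    congr 1
    rw [List.map_map, List.map_map]
    apply List.map_congr_left
    intro k _
    simp [List.map_map, Function.comp_def]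
  have hTnodup : T.Nodup := by
    rw [hT, List.nodup_flatten]
    constructor
    · intro l' hl'
      obtain ⟨k, _, rfl⟩ := List.mem_map.mp hl'
      refine (hnd k).map ?_
      intro m n h
      have h' : a * m + (k : ℕ) = a * n + (k : ℕ) := h
      have hk : 0 < a := Nat.lt_of_le_of_lt (Nat.zero_le _) k.2
      exact Nat.eq_of_mul_eq_mul_left hk (by omega)
    · rw [List.pairwise_map]
      refine List.Pairwise.imp ?_ (List.nodup_finRange a)
      intro k₁ k₂ hne e he1 he2
      obtain ⟨m, _, rfl⟩ := List.mem_map.mp he1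
      obtain ⟨n, _, heq⟩ := List.mem_map.mp he2
      have hk₁ : k₁.1 < a := k₁.2
      have hk₂ : k₂.1 < a := k₂.2
      have h1 : (a * m + k₁.1) % a = k₁.1 := by
        rw [Nat.mul_add_mod, Nat.mod_eq_of_lt hk₁]
      have h2 : (a * n + k₂.1) % a = k₂.1 := by
        rw [Nat.mul_add_mod, Nat.mod_eq_of_lt hk₂]
      rw [heq] at h2
      exact hne (Fin.ext (by omega))
  have hLrefl : ∀ R ∈ L.map W, SetRel.id ⊆ R := by
    intro R hR
    obtain ⟨n, _, rfl⟩ := List.mem_map.mp hR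
    exact hWrefl n
  have hkmem : ∀ k, (x k, y k) ∈ chainRel (P.map Prod.fst) := by
    intro k
    rw [hPfst]
    refine chainRel_sublist ?_ hLrefl (hchain k)
    exact List.Sublist.map W (List.sublist_flatten_of_mem (List.mem_map.mpr ⟨k, List.mem_finRange k, rfl⟩))
  have hwit : ∀ p ∈ P, ∀ x y : Fin a → A, (∀ k, (x k, y k) ∈ p.1) → (ops i x, ops i y) ∈ p.2 := by
    intro p hp
    rw [hP, List.mem_flatten] at hp
    obtain ⟨bl, hbl, hpbl⟩ := hp
    obtain ⟨k, _, rfl⟩ := List.mem_map.mp hbl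
    obtain ⟨n, _, rfl⟩ := List.mem_map.mp hpbl
    intro x' y' h
    exact hWit₂ (a * n + k) x' y' fun j => hWsub n k (h j)
  have hfinal := chain_witness (ops i) P hwit x y hkmem
  rw [hPsnd] at hfinal
  exact hsub (chainRel_subset_blob hTnodup hfinal)
end

section
/- Let L be a sublattice of the lattice of superequivalences on a set S. If the elements of L permute pairwise (ℐ ∘ ℐ' = ℐ' ∘ ℐ for all ℐ, ℐ' ∈ L), then L is a modular lattice. -/
open Set

variable {α : Type*}

/-- An ideal in the lattice of binary relations on a set: nonempty, downward
closed, and closed under finite unions (= finite joins). -/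
def IsIdeal (ℐ : Set (Set (α × α))) : Prop :=
  ℐ.Nonempty ∧ (∀ R ∈ ℐ, ∀ T ⊆ R, T ∈ ℐ) ∧ (∀ R ∈ ℐ, ∀ S ∈ ℐ, R ∪ S ∈ ℐ)

/-- A superequivalence: an ideal of relations containing the diagonal, closed
under relational opposites, and closed under composition of relations. -/
def IsSuperEq (ℐ : Set (Set (α × α))) : Prop :=
  IsIdeal ℐ ∧ SetRel.id ∈ ℐ ∧ (∀ R ∈ ℐ, Prod.swap ⁻¹' R ∈ ℐ) ∧
    (∀ R ∈ ℐ, ∀ S ∈ ℐ, SetRel.comp R S ∈ ℐ)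

/-- Composition of ideals of relations: the ideal generated by the compositions
`R ○ S` of members (this generating family is directed, so the generated ideal
is its downward closure). -/
def idealComp (ℐ 𝒥 : Set (Set (α × α))) : Set (Set (α × α)) :=
  {T | ∃ R ∈ ℐ, ∃ S ∈ 𝒥, T ⊆ SetRel.comp R S}

/-- The ideal of relations generated by a set `G` of relations: everything
below a finite union of members of `G`. -/
def idealGen (G : Set (Set (α × α))) : Set (Set (α × α)) :=
  {T | ∃ s : Finset (Set (α × α)), ↑s ⊆ G ∧ T ⊆ ⋃₀ ↑s}

/-- The set of finite (nonempty) compositions of relations from `X`. -/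
def comps (X : Set (Set (α × α))) : Set (Set (α × α)) :=
  {T | ∃ l : List (Set (α × α)), l ≠ [] ∧ (∀ R ∈ l, R ∈ X) ∧ T = listComp l}

/-- The join of two superequivalences: the ideal generated by all finite
compositions of relations from their union. -/
def seJoin (ℐ 𝒥 : Set (Set (α × α))) : Set (Set (α × α)) :=
  idealGen (comps (ℐ ∪ 𝒥))

/-- The join of a family of superequivalences. -/
def seSup (S : Set (Set (Set (α × α)))) : Set (Set (α × α)) :=
  idealGen (comps (⋃₀ S))

open scoped Uniformity

section Aux
variable {α : Type*} {ℐ 𝒥 z : Set (Set (α × α))}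

lemma empty_mem (hz : IsSuperEq z) : (∅ : Set (α × α)) ∈ z :=
  hz.1.2.1 _ hz.2.1 _ (Set.empty_subset _)

lemma sUnion_mem (hz : IsSuperEq z) (s : Finset (Set (α × α))) (hs : ↑s ⊆ z) :
    ⋃₀ ↑s ∈ z := by
  classical
  induction s using Finset.induction with
  | empty => simpa using empty_mem hz
  | @insert R s hR ih =>
    rw [Finset.coe_insert, Set.sUnion_insert]
    have hs' : ↑s ⊆ z := fun T hT => hs (by simp [hT])
    exact hz.1.2.2 _ (hs (by simp)) _ (ih hs')

lemma listComp_mem (hz : IsSuperEq z) :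
    ∀ l : List (Set (α × α)), l ≠ [] → (∀ R ∈ l, R ∈ z) → listComp l ∈ z := by
  intro l
  induction l with
  | nil => simp
  | cons R t ih =>
    intro _ hmem
    cases t with
    | nil => exact hmem R (by simp)
    | cons S t' =>
      have h1 : listComp (S :: t') ∈ z := ih (by simp) (fun T hT => hmem T (by simp [hT]))
      exact hz.2.2.2 _ (hmem R (by simp)) _ h1

lemma seJoin_subset (hz : IsSuperEq z) (hI : ℐ ⊆ z) (hJ : 𝒥 ⊆ z) :
    seJoin ℐ 𝒥 ⊆ z := by
  rintro T ⟨s, hs, hTs⟩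
  refine hz.1.2.1 _ (sUnion_mem hz s ?_) _ hTs
  intro U hU
  obtain ⟨l, hl, hlmem, rfl⟩ := hs hU
  exact listComp_mem hz l hl fun R hR => (hlmem R hR).elim (fun h => hI h) (fun h => hJ h)

lemma seJoin_mono_right {𝒥' : Set (Set (α × α))} (h : 𝒥 ⊆ 𝒥') :
    seJoin ℐ 𝒥 ⊆ seJoin ℐ 𝒥' := by
  rintro T ⟨s, hs, hTs⟩
  refine ⟨s, fun U hU => ?_, hTs⟩
  obtain ⟨l, hl, hlmem, rfl⟩ := hs hU
  exact ⟨l, hl, fun R hR => (hlmem R hR).imp id (fun h' => h h'), rfl⟩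

lemma idealComp_subset_seJoin : idealComp ℐ 𝒥 ⊆ seJoin ℐ 𝒥 := by
  rintro T ⟨R, hR, S, hS, hT⟩
  refine ⟨{SetRel.comp R S}, ?_, by simpa using hT⟩
  intro U hU
  simp only [Finset.coe_singleton, Set.mem_singleton_iff] at hU
  subst hU
  refine ⟨[R, S], by simp, ?_, rfl⟩
  intro X hX
  simp only [List.mem_cons, List.mem_singleton, List.not_mem_nil, or_false] at hX
  rcases hX with rfl | rfl
  · exact Or.inl hR
  · exact Or.inr hS

lemma left_subset_idealComp (hI : IsSuperEq ℐ) (hJ : IsSuperEq 𝒥) :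
    ℐ ⊆ idealComp ℐ 𝒥 := by
  intro R hR
  refine ⟨R, hR, SetRel.id, hJ.2.1, ?_⟩
  rintro ⟨a, b⟩ hab
  exact ⟨b, hab, rfl⟩

lemma right_subset_idealComp (hI : IsSuperEq ℐ) (hJ : IsSuperEq 𝒥) :
    𝒥 ⊆ idealComp ℐ 𝒥 := by
  intro S hS
  refine ⟨SetRel.id, hI.2.1, S, hS, ?_⟩
  rintro ⟨a, b⟩ hab
  exact ⟨a, rfl, hab⟩

lemma idealComp_union (hI : IsSuperEq ℐ) (hJ : IsSuperEq 𝒥)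
    {T T' : Set (α × α)} (h : T ∈ idealComp ℐ 𝒥) (h' : T' ∈ idealComp ℐ 𝒥) :
    T ∪ T' ∈ idealComp ℐ 𝒥 := by
  obtain ⟨R, hR, S, hS, hT⟩ := h
  obtain ⟨R', hR', S', hS', hT'⟩ := h'
  refine ⟨R ∪ R', hI.1.2.2 _ hR _ hR', S ∪ S', hJ.1.2.2 _ hS _ hS', ?_⟩
  exact Set.union_subset
    (hT.trans (SetRel.comp_subset_comp Set.subset_union_left Set.subset_union_left))
    (hT'.trans (SetRel.comp_subset_comp Set.subset_union_right Set.subset_union_right))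

lemma idealComp_comp (hI : IsSuperEq ℐ) (hJ : IsSuperEq 𝒥)
    (hperm : idealComp ℐ 𝒥 = idealComp 𝒥 ℐ)
    {T T' : Set (α × α)} (h : T ∈ idealComp ℐ 𝒥) (h' : T' ∈ idealComp ℐ 𝒥) :
    SetRel.comp T T' ∈ idealComp ℐ 𝒥 := by
  obtain ⟨R, hR, S, hS, hT⟩ := h
  obtain ⟨R', hR', S', hS', hT'⟩ := h'
  have hmid : SetRel.comp S R' ∈ idealComp ℐ 𝒥 := by
    rw [hperm]; exact ⟨S, hS, R', hR', le_refl _⟩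
  obtain ⟨A, hA, B, hB, hAB⟩ := hmid
  refine ⟨SetRel.comp R A, hI.2.2.2 _ hR _ hA, SetRel.comp B S', hJ.2.2.2 _ hB _ hS', ?_⟩
  calc SetRel.comp T T' ⊆ SetRel.comp (SetRel.comp R S) (SetRel.comp R' S') := SetRel.comp_subset_comp hT hT'
    _ = SetRel.comp R (SetRel.comp (SetRel.comp S R') S') := by
        simp only [SetRel.comp_assoc]
    _ ⊆ SetRel.comp R (SetRel.comp (SetRel.comp A B) S') :=
        SetRel.comp_subset_comp (le_refl _) (SetRel.comp_subset_comp hAB (le_refl _))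
    _ = SetRel.comp (SetRel.comp R A) (SetRel.comp B S') := by simp only [SetRel.comp_assoc]

lemma listComp_mem_idealComp (hI : IsSuperEq ℐ) (hJ : IsSuperEq 𝒥)
    (hperm : idealComp ℐ 𝒥 = idealComp 𝒥 ℐ) :
    ∀ l : List (Set (α × α)), l ≠ [] → (∀ R ∈ l, R ∈ ℐ ∪ 𝒥) →
      listComp l ∈ idealComp ℐ 𝒥 := by
  intro l
  induction l with
  | nil => simp
  | cons R t ihl =>
    intro _ hlmem
    cases t with
    | nil =>
      rcases hlmem R (by simp) with h | h
      · exact left_subset_idealComp hI hJ h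
      · exact right_subset_idealComp hI hJ h
    | cons S t' =>
      have h1 : listComp (S :: t') ∈ idealComp ℐ 𝒥 :=
        ihl (by simp) (fun X hX => hlmem X (by simp [hX]))
      have h2 : R ∈ idealComp ℐ 𝒥 := by
        rcases hlmem R (by simp) with h | h
        · exact left_subset_idealComp hI hJ h
        · exact right_subset_idealComp hI hJ h
      exact idealComp_comp hI hJ hperm h2 h1

lemma seJoin_eq_idealComp (hI : IsSuperEq ℐ) (hJ : IsSuperEq 𝒥)
    (hperm : idealComp ℐ 𝒥 = idealComp 𝒥 ℐ) :
    seJoin ℐ 𝒥 = idealComp ℐ 𝒥 := by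
  classical
  apply Set.Subset.antisymm _ idealComp_subset_seJoin
  rintro T ⟨s, hs, hTs⟩
  have hdown : ∀ U ∈ idealComp ℐ 𝒥, ∀ V ⊆ U, V ∈ idealComp ℐ 𝒥 := by
    rintro U ⟨R, hR, S, hS, hU⟩ V hVU
    exact ⟨R, hR, S, hS, hVU.trans hU⟩
  refine hdown _ ?_ _ hTs
  clear hTs T
  induction s using Finset.induction with
  | empty =>
    simp only [Finset.coe_empty, Set.sUnion_empty]
    exact ⟨SetRel.id, hI.2.1, SetRel.id, hJ.2.1, Set.empty_subset _⟩
  | @insert U s hR ih =>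
    rw [Finset.coe_insert, Set.sUnion_insert]
    have hUc : U ∈ comps (ℐ ∪ 𝒥) := hs (by simp)
    have hUmem : U ∈ idealComp ℐ 𝒥 := by
      obtain ⟨l, hl, hlmem, rfl⟩ := hUc
      exact listComp_mem_idealComp hI hJ hperm l hl hlmem
    exact idealComp_union hI hJ hUmem (ih (fun V hV => hs (by simp [hV])))

end Aux

theorem stmt7 (L : Set (Set (Set (α × α))))
    (hL : ∀ ℐ ∈ L, IsSuperEq ℐ)
    (hmeet : ∀ ℐ ∈ L, ∀ 𝒥 ∈ L, ℐ ∩ 𝒥 ∈ L)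
    (hjoin : ∀ ℐ ∈ L, ∀ 𝒥 ∈ L, seJoin ℐ 𝒥 ∈ L)
    (hperm : ∀ ℐ ∈ L, ∀ 𝒥 ∈ L, idealComp ℐ 𝒥 = idealComp 𝒥 ℐ) :
    ∀ x ∈ L, ∀ y ∈ L, ∀ z ∈ L, x ⊆ z → seJoin x (y ∩ z) = seJoin x y ∩ z := by
  intro x hx y hy z hz hxz
  have hxse := hL x hx
  have hyse := hL y hy
  have hzse := hL z hz
  have hyz : y ∩ z ∈ L := hmeet y hy z hz
  have hyzse := hL _ hyz
  apply Set.Subset.antisymm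
  · intro T hT
    constructor
    · exact seJoin_mono_right Set.inter_subset_left hT
    · exact seJoin_subset hzse hxz Set.inter_subset_right hT
  · rintro T ⟨hT1, hT2⟩
    rw [seJoin_eq_idealComp hxse hyse (hperm x hx y hy)] at hT1
    obtain ⟨R, hR, S, hS, hTRS⟩ := hT1
    -- shrink S to S' = S ∩ (R⁻¹ ∘ T)
    set S' : Set (α × α) := S ∩ SetRel.comp (Prod.swap ⁻¹' R) T with hS'def
    have hS'y : S' ∈ y := hyse.1.2.1 _ hS _ Set.inter_subset_left
    have hS'z : S' ∈ z := by
      have hRz : R ∈ z := hxz hR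
      have : SetRel.comp (Prod.swap ⁻¹' R) T ∈ z :=
        hzse.2.2.2 _ (hzse.2.2.1 _ hRz) _ hT2
      exact hzse.1.2.1 _ this _ Set.inter_subset_right
    have hTRS' : T ⊆ SetRel.comp R S' := by
      rintro ⟨a, b⟩ hab
      obtain ⟨c, hac, hcb⟩ := hTRS hab
      exact ⟨c, hac, hcb, a, hac, hab⟩
    have : T ∈ idealComp x (y ∩ z) := ⟨R, hR, S', ⟨hS'y, hS'z⟩, hTRS'⟩
    exact idealComp_subset_seJoin this
end

section
/- If π : A → B is a surjective function and (ℐᵢ)_{i∈I} is a family of superequivalences on B, then the inverse image of the join equals the join of the inverse images: π⁻¹(⋁ᵢ ℐᵢ) = ⋁ᵢ π⁻¹(ℐᵢ). -/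
open Set

variable {α : Type*}

/-- Preimage of a relation along a function. -/
def relPre {A B : Type*} (f : A → B) (R : Set (B × B)) : Set (A × A) :=
  {p | (f p.1, f p.2) ∈ R}

/-- Inverse image of an ideal of relations along a function: the ideal
generated by the preimages of its members (a directed family, so the
generated ideal is the downward closure). -/
def invIm {A B : Type*} (f : A → B) (ℐ : Set (Set (B × B))) : Set (Set (A × A)) :=
  {T | ∃ R ∈ ℐ, T ⊆ relPre f R}

lemma relPre_SetRel.comp {A B : Type*} {f : A → B} (hf : Function.Surjective f)
    (R S : Set (B × B)) :
    relPre f (SetRel.comp R S) = SetRel.comp (relPre f R) (relPre f S) := by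
  ext ⟨a, a'⟩
  simp only [relPre, mem_setOf_eq, SetRel.mem_comp]
  constructor
  · rintro ⟨b, hb1, hb2⟩
    obtain ⟨c, rfl⟩ := hf b
    exact ⟨c, hb1, hb2⟩
  · rintro ⟨c, h1, h2⟩
    exact ⟨f c, h1, h2⟩

lemma compRel_relPre_le {A B : Type*} (π : A → B) (R S : Set (B × B)) :
    SetRel.comp (relPre π R) (relPre π S) ⊆ relPre π (SetRel.comp R S) := by
  rintro ⟨a, a'⟩ ⟨c, hc1, hc2⟩
  exact ⟨π c, hc1, hc2⟩

lemma relPre_listComp {A B : Type*} {f : A → B} (hf : Function.Surjective f) :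
    ∀ l : List (Set (B × B)), l ≠ [] →
      relPre f (listComp l) = listComp (l.map (relPre f))
  | [], h => absurd rfl h
  | [R], _ => rfl
  | R :: S :: l, _ => by
    show relPre f (SetRel.comp R (listComp (S :: l))) =
      SetRel.comp (relPre f R) (listComp ((S :: l).map (relPre f)))
    rw [relPre_SetRel.comp hf, relPre_listComp hf (S :: l) (by simp)]

lemma aux_list {A B : Type*} {π : A → B} (𝒢 : Set (Set (B × B))) :
    ∀ l : List (Set (A × A)), l ≠ [] → (∀ R' ∈ l, ∃ R ∈ 𝒢, R' ⊆ relPre π R) →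
      ∃ m : List (Set (B × B)), m ≠ [] ∧ (∀ R ∈ m, R ∈ 𝒢) ∧
        listComp l ⊆ relPre π (listComp m)
  | [], h, _ => absurd rfl h
  | [R'], _, hmem => by
    obtain ⟨R, hR, hsub⟩ := hmem R' (by simp)
    exact ⟨[R], by simp, by simpa using hR, hsub⟩
  | R' :: S' :: l, _, hmem => by
    obtain ⟨m, hm0, hmmem, hmsub⟩ := aux_list 𝒢 (S' :: l) (by simp)
      (fun X hX => hmem X (List.mem_cons_of_mem _ hX))
    obtain ⟨R, hR, hsub⟩ := hmem R' (by simp)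
    refine ⟨R :: m, by simp, ?_, ?_⟩
    · intro X hX
      rcases List.mem_cons.1 hX with rfl | hX
      · exact hR
      · exact hmmem _ hX
    · have h1 : listComp (R' :: S' :: l) ⊆ SetRel.comp (relPre π R) (relPre π (listComp m)) := by
        exact fun ⟨a, c⟩ ⟨b, h1, h2⟩ => ⟨b, hsub h1, hmsub h2⟩
      obtain ⟨m0, mrest, rfl⟩ := List.exists_cons_of_ne_nil hm0
      exact h1.trans (compRel_relPre_le π R (listComp (m0 :: mrest)))

theorem stmt8 {A B : Type*} {I : Type*} (π : A → B) (hπ : Function.Surjective π)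
    (ℐ : I → Set (Set (B × B))) (h : ∀ i, IsSuperEq (ℐ i)) :
    invIm π (seSup (Set.range ℐ)) = seSup (Set.range fun i => invIm π (ℐ i)) := by
  classical
  ext T
  simp only [invIm, seSup, idealGen, comps, mem_setOf_eq]
  constructor
  · rintro ⟨R, ⟨s, hs, hRs⟩, hTR⟩
    refine ⟨s.image (relPre π), ?_, ?_⟩
    · intro U hU
      simp only [Finset.coe_image, mem_image, Finset.mem_coe] at hU
      obtain ⟨V, hVs, rfl⟩ := hU
      obtain ⟨l, hl0, hlmem, rfl⟩ := hs hVs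
      refine ⟨l.map (relPre π), by simpa using hl0, ?_, relPre_listComp hπ l hl0⟩
      intro R' hR'
      simp only [List.mem_map] at hR'
      obtain ⟨R0, hR0, rfl⟩ := hR'
      obtain ⟨X, hX, hR0X⟩ := hlmem R0 hR0
      obtain ⟨i, rfl⟩ := hX
      exact ⟨invIm π (ℐ i), ⟨i, rfl⟩, R0, hR0X, subset_rfl⟩
    · intro p hp
      obtain ⟨V, hVs, hpV⟩ := hRs (hTR hp)
      exact ⟨relPre π V, Finset.mem_coe.2 (Finset.mem_image_of_mem _ hVs), hpV⟩
  · rintro ⟨s, hs, hTs⟩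
    have key : ∀ U ∈ s, ∃ V, (∃ m : List (Set (B × B)), m ≠ [] ∧
        (∀ R ∈ m, R ∈ ⋃₀ Set.range ℐ) ∧ V = listComp m) ∧ U ⊆ relPre π V := by
      intro U hU
      obtain ⟨l, hl0, hlmem, rfl⟩ := hs hU
      have hhyp : ∀ R' ∈ l, ∃ R ∈ ⋃₀ Set.range ℐ, R' ⊆ relPre π R := by
        intro R' hR'
        obtain ⟨X, ⟨i, rfl⟩, hmem⟩ := hlmem R' hR'
        obtain ⟨R, hR, hsub⟩ := hmem
        exact ⟨R, ⟨ℐ i, ⟨i, rfl⟩, hR⟩, hsub⟩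
      obtain ⟨m, hm0, hmmem, hmsub⟩ := aux_list (π := π) (⋃₀ Set.range ℐ) l hl0 hhyp
      exact ⟨listComp m, ⟨m, hm0, hmmem, rfl⟩, hmsub⟩
    choose V hV1 hV2 using key
    refine ⟨⋃₀ ↑(s.attach.image fun x => V x.1 x.2),
      ⟨s.attach.image fun x => V x.1 x.2, ?_, subset_rfl⟩, ?_⟩
    · intro X hX
      simp only [Finset.coe_image, mem_image, Finset.mem_coe, Finset.mem_attach,
        true_and, Subtype.exists] at hX
      obtain ⟨U, hU, rfl⟩ := hX
      exact hV1 U hU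
    · intro p hp
      obtain ⟨U, hU, hpU⟩ := hTs hp
      have hmem : V U (Finset.mem_coe.1 hU) ∈ (↑(s.attach.image fun x => V x.1 x.2) : Set (Set (B × B))) := by
        simp only [Finset.coe_image, mem_image, Finset.mem_coe, Finset.mem_attach,
          true_and, Subtype.exists]
        exact ⟨U, Finset.mem_coe.1 hU, rfl⟩
      exact ⟨V U (Finset.mem_coe.1 hU), hmem, hV2 U (Finset.mem_coe.1 hU) hpU⟩
end

section
/- For any set S, the lattice of superequivalences on S is an algebraic (compactly generated complete) lattice. -/
open Set

variable {α : Type*}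

/-- The type of superequivalences on `α`, ordered by inclusion of ideals. -/
def SuperEqLat (α : Type*) := {ℐ : Set (Set (α × α)) // IsSuperEq ℐ}

namespace SuperEqLat

instance : PartialOrder (SuperEqLat α) :=
  inferInstanceAs (PartialOrder {ℐ : Set (Set (α × α)) // IsSuperEq ℐ})

theorem isSuperEq_inter (s : Set (SuperEqLat α)) :
    IsSuperEq {R : Set (α × α) | ∀ I ∈ s, R ∈ I.1} := by
  refine ⟨⟨⟨∅, fun I hI => I.2.1.2.1 SetRel.id I.2.2.1 ∅ (Set.empty_subset _)⟩, ?_, ?_⟩,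
    ?_, ?_, ?_⟩
  · intro R hR T hT I hI
    exact I.2.1.2.1 R (hR I hI) T hT
  · intro R hR T hT I hI
    exact I.2.1.2.2 R (hR I hI) T (hT I hI)
  · intro I hI
    exact I.2.2.1
  · intro R hR I hI
    exact I.2.2.2.1 R (hR I hI)
  · intro R hR T hT I hI
    exact I.2.2.2.2 R (hR I hI) T (hT I hI)

instance : InfSet (SuperEqLat α) :=
  ⟨fun s => ⟨{R : Set (α × α) | ∀ I ∈ s, R ∈ I.1}, isSuperEq_inter s⟩⟩

/-- Superequivalences form a complete lattice (arbitrary meets are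
intersections; joins are the least superequivalences above). -/
instance : CompleteLattice (SuperEqLat α) :=
  completeLatticeOfInf (SuperEqLat α) (by
    intro s
    constructor
    · intro I hI R hR
      exact hR I hI
    · intro b hb R hR I hI
      exact hb hI hR)

end SuperEqLat

section Aux

theorem se_le_iff {I J : SuperEqLat α} : I ≤ J ↔ I.1 ⊆ J.1 := Iff.rfl

theorem sInf_mem_iff {s : Set (SuperEqLat α)} {R : Set (α × α)} :
    R ∈ (sInf s).1 ↔ ∀ I ∈ s, R ∈ I.1 := Iff.rfl

/-- The union of a nonempty directed family of superequivalences is a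
superequivalence. -/
theorem isSuperEq_dUnion (s : Set (SuperEqLat α)) (hne : s.Nonempty)
    (hdir : DirectedOn (· ≤ ·) s) :
    IsSuperEq {R : Set (α × α) | ∃ I ∈ s, R ∈ I.1} := by
  obtain ⟨I₀, hI₀⟩ := hne
  refine ⟨⟨⟨SetRel.id, ⟨I₀, hI₀, I₀.2.2.1⟩⟩, ?_, ?_⟩, ⟨I₀, hI₀, I₀.2.2.1⟩, ?_, ?_⟩
  · rintro R ⟨I, hI, hR⟩ T hT
    exact ⟨I, hI, I.2.1.2.1 R hR T hT⟩
  · rintro R ⟨I, hI, hR⟩ S ⟨J, hJ, hS⟩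
    obtain ⟨K, hK, hIK, hJK⟩ := hdir I hI J hJ
    exact ⟨K, hK, K.2.1.2.2 R (hIK hR) S (hJK hS)⟩
  · rintro R ⟨I, hI, hR⟩
    exact ⟨I, hI, I.2.2.2.1 R hR⟩
  · rintro R ⟨I, hI, hR⟩ S ⟨J, hJ, hS⟩
    obtain ⟨K, hK, hIK, hJK⟩ := hdir I hI J hJ
    exact ⟨K, hK, K.2.2.2.2 R (hIK hR) S (hJK hS)⟩

theorem sSup_directed_eq (s : Set (SuperEqLat α)) (hne : s.Nonempty)
    (hdir : DirectedOn (· ≤ ·) s) :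
    (sSup s).1 = {R : Set (α × α) | ∃ I ∈ s, R ∈ I.1} := by
  set U : SuperEqLat α := ⟨_, isSuperEq_dUnion s hne hdir⟩
  have h1 : sSup s ≤ U := sSup_le fun I hI => fun R hR => ⟨I, hI, hR⟩
  have h2 : U ≤ sSup s := by
    rintro R ⟨I, hI, hR⟩
    exact le_sSup hI hR
  exact le_antisymm h1 h2 ▸ rfl

/-- The superequivalence generated by a single relation. -/
def genSE (R : Set (α × α)) : SuperEqLat α := sInf {I : SuperEqLat α | R ∈ I.1}

theorem mem_genSE (R : Set (α × α)) : R ∈ (genSE R).1 := fun _ hI => hI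

theorem genSE_le {R : Set (α × α)} {I : SuperEqLat α} (h : R ∈ I.1) :
    genSE R ≤ I := sInf_le h

theorem genSE_compact (R : Set (α × α)) :
    IsCompactElement (genSE R : SuperEqLat α) := by
  rw [CompleteLattice.isCompactElement_iff_le_of_directed_sSup_le]
  intro s hne hdir hle
  have : R ∈ (sSup s).1 := hle (mem_genSE R)
  rw [sSup_directed_eq s hne hdir] at this
  obtain ⟨I, hI, hR⟩ := this
  exact ⟨I, hI, genSE_le hR⟩

end Aux

/-- The complete lattice of superequivalences on a set is algebraic, i.e.,
compactly generated. -/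
theorem stmt9 (α : Type*) : IsCompactlyGenerated (SuperEqLat α) := by
  constructor
  intro I
  refine ⟨genSE '' I.1, ?_, ?_⟩
  · rintro J ⟨R, hR, rfl⟩
    exact genSE_compact R
  · refine le_antisymm (sSup_le ?_) ?_
    · rintro J ⟨R, hR, rfl⟩
      exact genSE_le hR
    · intro R hR
      exact le_sSup (Set.mem_image_of_mem genSE hR) (mem_genSE R)
end

section
/- Let A be an algebra with a Mal'tsev term p (a ternary term with p(x,x,y) = y and p(x,y,y) = x). Then any two compatible superequivalences on A permute: ℐ ∘ ℐ' = ℐ' ∘ ℐ. -/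
open Set

variable {α : Type*}

variable {A : Type*} {ι : Type*} {ar : ι → ℕ}

/-- Terms over a signature (operation symbols `ι` with arities `ar`) in `n` variables. -/
inductive Term (ι : Type*) (ar : ι → ℕ) (n : ℕ) : Type _ where
  | var : Fin n → Term ι ar n
  | app : (i : ι) → (Fin (ar i) → Term ι ar n) → Term ι ar n

/-- Evaluation of a term in an algebra `A` with operations `ops`. -/
def Term.eval {A : Type*} {ι : Type*} {ar : ι → ℕ} {n : ℕ}
    (ops : ∀ i, (Fin (ar i) → A) → A) (v : Fin n → A) : Term ι ar n → A
  | Term.var k => v k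
  | Term.app i ts => ops i fun j => Term.eval ops v (ts j)

/-- Componentwise image of a tuple of relations under an `n`-ary operation. -/
def opImg {A : Type*} {n : ℕ} (w : (Fin n → A) → A) (R : Fin n → Set (A × A)) :
    Set (A × A) :=
  {p | ∃ a b : Fin n → A, (∀ k, (a k, b k) ∈ R k) ∧ p = (w a, w b)}

/-- A set (ideal) of relations on the algebra `A` is compatible if it is closed
under componentwise images of the basic operations. -/
def seCompatible (ops : ∀ i, (Fin (ar i) → A) → A) (ℐ : Set (Set (A × A))) : Prop :=
  ∀ i, ∀ R : Fin (ar i) → Set (A × A), (∀ k, R k ∈ ℐ) → opImg (ops i) R ∈ ℐ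

lemma termImg_mem {A ι : Type*} {ar : ι → ℕ} (ops : ∀ i, (Fin (ar i) → A) → A)
    {ℐ : Set (Set (A × A))} (hI : IsSuperEq ℐ) (hIc : seCompatible ops ℐ)
    {n : ℕ} (t : Term ι ar n) (R : Fin n → Set (A × A)) (hR : ∀ k, R k ∈ ℐ) :
    opImg (fun v => t.eval ops v) R ∈ ℐ := by
  induction t with
  | var k =>
      refine hI.1.2.1 (R k) (hR k) _ ?_
      rintro p ⟨a, b, h, rfl⟩
      exact h k
  | app i ts ih =>
      refine hI.1.2.1 _ (hIc i (fun j => opImg (fun v => (ts j).eval ops v) R)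
        (fun j => ih j)) _ ?_
      rintro p ⟨a, b, h, rfl⟩
      exact ⟨fun j => (ts j).eval ops a, fun j => (ts j).eval ops b,
        fun j => ⟨a, b, h, rfl⟩, rfl⟩

lemma key_incl {A ι : Type*} {ar : ι → ℕ} (ops : ∀ i, (Fin (ar i) → A) → A)
    (t : Term ι ar 3)
    (ht1 : ∀ x y : A, t.eval ops ![x, x, y] = y)
    (ht2 : ∀ x y : A, t.eval ops ![x, y, y] = x)
    (ℐ 𝒥 : Set (Set (A × A)))
    (hI : IsSuperEq ℐ) (hIc : seCompatible ops ℐ)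
    (hJ : IsSuperEq 𝒥) (hJc : seCompatible ops 𝒥) :
    idealComp ℐ 𝒥 ⊆ idealComp 𝒥 ℐ := by
  rintro T ⟨R, hR, S, hS, hT⟩
  refine ⟨opImg (fun v => t.eval ops v) ![SetRel.id, SetRel.id, S], ?_,
    opImg (fun v => t.eval ops v) ![R, SetRel.id, SetRel.id], ?_, ?_⟩
  · refine termImg_mem ops hJ hJc t _ ?_
    intro k
    fin_cases k
    · exact hJ.2.1
    · exact hJ.2.1
    · exact hS
  · refine termImg_mem ops hI hIc t _ ?_
    intro k
    fin_cases k
    · exact hR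
    · exact hI.2.1
    · exact hI.2.1
  · intro p hp
    obtain ⟨y, hxy, hyz⟩ := hT hp
    refine ⟨t.eval ops ![p.1, y, p.2], ⟨![p.1, y, y], ![p.1, y, p.2], ?_, ?_⟩,
      ⟨![p.1, y, p.2], ![y, y, p.2], ?_, ?_⟩⟩
    · intro k
      fin_cases k
      · exact rfl
      · exact rfl
      · exact hyz
    · ext
      · exact (ht2 p.1 y).symm
      · rfl
    · intro k
      fin_cases k
      · exact hxy
      · exact rfl
      · exact rfl
    · ext
      · rfl
      · exact (ht1 y p.2).symm

theorem stmt10 (ops : ∀ i, (Fin (ar i) → A) → A) (t : Term ι ar 3)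
    (ht1 : ∀ x y : A, t.eval ops ![x, x, y] = y)
    (ht2 : ∀ x y : A, t.eval ops ![x, y, y] = x)
    (ℐ 𝒥 : Set (Set (A × A)))
    (hI : IsSuperEq ℐ) (hIc : seCompatible ops ℐ)
    (hJ : IsSuperEq 𝒥) (hJc : seCompatible ops 𝒥) :
    idealComp ℐ 𝒥 = idealComp 𝒥 ℐ := by
  apply Set.Subset.antisymm
  · exact key_incl ops t ht1 ht2 ℐ 𝒥 hI hIc hJ hJc
  · exact key_incl ops t ht1 ht2 𝒥 ℐ hJ hJc hI hIc
end

section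
/- If A is an algebra in a congruence-modular variety, then the lattice of compatible superuniformities on A is modular. -/
open Filter Set

variable {α : Type*}

/-- An ideal in the lattice of filters of relations (filters carry the
reverse-inclusion order, which is Mathlib's order on `Filter`): nonempty,
downward closed, and closed under finite joins. -/
def IsFilIdeal (ℰ : Set (Filter (α × α))) : Prop :=
  ℰ.Nonempty ∧ (∀ F ∈ ℰ, ∀ G ≤ F, G ∈ ℰ) ∧ (∀ F ∈ ℰ, ∀ G ∈ ℰ, F ⊔ G ∈ ℰ)

/-- A superuniformity: an ideal of filters of relations containing the
principal filter on the diagonal, closed under opposites of filters, and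
closed under composition of filters. -/
def IsSuperUnif (ℰ : Set (Filter (α × α))) : Prop :=
  IsFilIdeal ℰ ∧ 𝓟 SetRel.id ∈ ℰ ∧ (∀ F ∈ ℰ, Filter.map Prod.swap F ∈ ℰ) ∧
    (∀ F ∈ ℰ, ∀ G ∈ ℰ, fComp F G ∈ ℰ)

/-- Composition of ideals of filters: the ideal generated by the filter
compositions of members (a directed family, hence the downward closure). -/
def filIdealComp (ℰ ℰ' : Set (Filter (α × α))) : Set (Filter (α × α)) :=
  {H | ∃ F ∈ ℰ, ∃ G ∈ ℰ', H ≤ fComp F G}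

/-- Composition of a nonempty list of filters of relations. -/
def filListComp : List (Filter (α × α)) → Filter (α × α)
  | [] => 𝓟 SetRel.id
  | [F] => F
  | F :: G :: l => fComp F (filListComp (G :: l))

/-- The set of finite (nonempty) compositions of filters from `X`. -/
def filComps (X : Set (Filter (α × α))) : Set (Filter (α × α)) :=
  {H | ∃ l : List (Filter (α × α)), l ≠ [] ∧ (∀ F ∈ l, F ∈ X) ∧ H = filListComp l}

/-- The ideal of filters generated by a set `G` of filters: everything below a
finite join of members. -/
def filIdealGen (G : Set (Filter (α × α))) : Set (Filter (α × α)) :=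
  {H | ∃ s : Finset (Filter (α × α)), ↑s ⊆ G ∧ H ≤ s.sup id}

/-- The join of two superuniformities: the ideal generated by all finite
compositions of filters from their union. -/
def suJoin (ℰ ℰ' : Set (Filter (α × α))) : Set (Filter (α × α)) :=
  filIdealGen (filComps (ℰ ∪ ℰ'))

/-- The join of a family of superuniformities. -/
def suSup (S : Set (Set (Filter (α × α)))) : Set (Filter (α × α)) :=
  filIdealGen (filComps (⋃₀ S))

variable {A : Type*} {ι : Type*} {ar : ι → ℕ}

/-- `m 0, …, m d` is a sequence of Day terms for the algebra `(A, ops)`. -/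
def DayTerms (ops : ∀ i, (Fin (ar i) → A) → A) (m : ℕ → Term ι ar 4) (d : ℕ) : Prop :=
  (∀ i ≤ d, ∀ x y : A, (m i).eval ops ![x, y, y, x] = x) ∧
  (∀ x y z w : A, (m 0).eval ops ![x, y, z, w] = x) ∧
  (∀ x y z w : A, (m d).eval ops ![x, y, z, w] = w) ∧
  (∀ i < d, Even i → ∀ x y : A,
    (m i).eval ops ![x, x, y, y] = (m (i + 1)).eval ops ![x, x, y, y]) ∧
  (∀ i < d, Odd i → ∀ x y z : A,
    (m i).eval ops ![x, y, y, z] = (m (i + 1)).eval ops ![x, y, y, z])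

/-- The filter generated by the componentwise images of tuples of members of
filters under an `n`-ary operation. -/
def opFilter {A : Type*} {n : ℕ} (w : (Fin n → A) → A) (F : Fin n → Filter (A × A)) :
    Filter (A × A) :=
  Filter.generate {T | ∃ S : Fin n → Set (A × A), (∀ k, S k ∈ F k) ∧ T = opImg w S}

/-- Compatibility of an ideal of filters with the operations of the algebra. -/
def suCompatible (ops : ∀ i, (Fin (ar i) → A) → A) (ℰ : Set (Filter (A × A))) : Prop :=
  ∀ i, ∀ F : Fin (ar i) → Filter (A × A), (∀ k, F k ∈ ℰ) → opFilter (ops i) F ∈ ℰ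


open Uniformity
open scoped SetRel

namespace S19

open scoped Classical

variable {α : Type*}

theorem mem_idRel {a b : α} : (a, b) ∈ (SetRel.id : Set (α × α)) ↔ a = b := Iff.rfl

theorem compRel_mono {f g h k : Set (α × α)} (h₁ : f ⊆ h) (h₂ : g ⊆ k) : f ○ g ⊆ h ○ k :=
  SetRel.comp_subset_comp h₁ h₂

theorem compRel_assoc (r s t : Set (α × α)) : (r ○ s) ○ t = r ○ (s ○ t) :=
  SetRel.comp_assoc r s t

theorem id_compRel (r : Set (α × α)) : SetRel.id ○ r = r := SetRel.id_comp r

theorem left_subset_compRel {s t : Set (α × α)} (h : SetRel.id ⊆ s) : t ⊆ t ○ s :=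
  fun ⟨_, y⟩ hxy => ⟨y, hxy, h rfl⟩

theorem right_subset_compRel {s t : Set (α × α)} (h : SetRel.id ⊆ s) : t ⊆ s ○ t :=
  fun ⟨x, _⟩ hxy => ⟨x, h rfl, hxy⟩

theorem swap_idRel : Prod.swap '' (SetRel.id : Set (α × α)) = SetRel.id := by
  ext ⟨a, b⟩
  constructor
  · rintro ⟨⟨c, d⟩, h, he⟩
    simp only [Prod.swap_prod_mk, Prod.mk.injEq] at he
    obtain ⟨rfl, rfl⟩ := he
    exact (mem_idRel.1 h).symm
  · intro h
    exact ⟨(b, a), (mem_idRel.1 h).symm, rfl⟩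

theorem prod_mk_mem_compRel {a b c : α} {s t : Set (α × α)} (h₁ : (a, c) ∈ s) (h₂ : (c, b) ∈ t) :
    (a, b) ∈ s ○ t := ⟨c, h₁, h₂⟩

theorem compRel_idRel (r : Set (α × α)) : r ○ SetRel.id = r := by
  ext ⟨a, b⟩
  constructor
  · rintro ⟨z, hz, hid⟩
    rcases mem_idRel.1 hid with rfl
    exact hz
  · intro h; exact ⟨b, h, rfl⟩

private theorem compMono (G : Filter (α × α)) :
    Monotone fun U : Set (α × α) => G.lift' fun V => U ○ V := by
  intro U U' h
  exact Filter.lift'_mono le_rfl fun V => compRel_mono h Subset.rfl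

theorem mem_fComp {F G : Filter (α × α)} {s : Set (α × α)} :
    s ∈ fComp F G ↔ ∃ U ∈ F, ∃ V ∈ G, U ○ V ⊆ s := by
  unfold fComp
  rw [Filter.mem_lift_sets (compMono G)]
  constructor
  · rintro ⟨U, hU, hs⟩
    rcases (Filter.mem_lift'_sets (fun V V' h => compRel_mono Subset.rfl h)).1 hs with ⟨V, hV, hsub⟩
    exact ⟨U, hU, V, hV, hsub⟩
  · rintro ⟨U, hU, V, hV, hsub⟩
    exact ⟨U, hU, (Filter.mem_lift'_sets (fun V V' h => compRel_mono Subset.rfl h)).2 ⟨V, hV, hsub⟩⟩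

theorem compRel_mem_fComp {F G : Filter (α × α)} {U V : Set (α × α)}
    (hU : U ∈ F) (hV : V ∈ G) : U ○ V ∈ fComp F G :=
  mem_fComp.2 ⟨U, hU, V, hV, Subset.rfl⟩

theorem fComp_mono {F F' G G' : Filter (α × α)} (h1 : F ≤ F') (h2 : G ≤ G') :
    fComp F G ≤ fComp F' G' := by
  intro s hs
  rcases mem_fComp.1 hs with ⟨U, hU, V, hV, hsub⟩
  exact mem_fComp.2 ⟨U, h1 hU, V, h2 hV, hsub⟩

theorem fComp_assoc (F G K : Filter (α × α)) :
    fComp (fComp F G) K = fComp F (fComp G K) := by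
  ext s
  constructor
  · rintro hs
    rcases mem_fComp.1 hs with ⟨W, hW, V, hV, hsub⟩
    rcases mem_fComp.1 hW with ⟨U, hU, V', hV', hsub'⟩
    refine mem_fComp.2 ⟨U, hU, V' ○ V, compRel_mem_fComp hV' hV, ?_⟩
    rw [← compRel_assoc]
    exact (compRel_mono hsub' Subset.rfl).trans hsub
  · rintro hs
    rcases mem_fComp.1 hs with ⟨U, hU, W, hW, hsub⟩
    rcases mem_fComp.1 hW with ⟨V, hV, V', hV', hsub'⟩
    refine mem_fComp.2 ⟨U ○ V, compRel_mem_fComp hU hV, V', hV', ?_⟩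
    rw [compRel_assoc]
    exact (compRel_mono Subset.rfl hsub').trans hsub

theorem fComp_idRel_right (F : Filter (α × α)) : fComp F (𝓟 SetRel.id) = F := by
  ext s
  constructor
  · intro hs
    rcases mem_fComp.1 hs with ⟨U, hU, V, hV, hsub⟩
    refine mem_of_superset hU ?_
    have : U ○ SetRel.id ⊆ U ○ V := compRel_mono Subset.rfl (mem_principal.1 hV)
    rw [compRel_idRel] at this
    exact this.trans hsub
  · intro hs
    refine mem_fComp.2 ⟨s, hs, SetRel.id, mem_principal_self _, ?_⟩
    rw [compRel_idRel]

theorem fComp_idRel_left (F : Filter (α × α)) : fComp (𝓟 SetRel.id) F = F := by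
  ext s
  constructor
  · intro hs
    rcases mem_fComp.1 hs with ⟨U, hU, V, hV, hsub⟩
    refine mem_of_superset hV ?_
    have : SetRel.id ○ V ⊆ U ○ V := compRel_mono (mem_principal.1 hU) Subset.rfl
    rw [id_compRel] at this
    exact this.trans hsub
  · intro hs
    refine mem_fComp.2 ⟨SetRel.id, mem_principal_self _, s, hs, ?_⟩
    rw [id_compRel]

/-- "reflexive" filters: every member contains the diagonal. -/
theorem sup_le_fComp {F G : Filter (α × α)} (hF : 𝓟 SetRel.id ≤ F) (hG : 𝓟 SetRel.id ≤ G) :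
    F ⊔ G ≤ fComp F G := by
  intro s hs
  rcases mem_fComp.1 hs with ⟨U, hU, V, hV, hsub⟩
  have hFr : SetRel.id ⊆ U := (principal_le_iff.1 hF) U hU
  have hGr : SetRel.id ⊆ V := (principal_le_iff.1 hG) V hV
  refine mem_sup.2 ⟨mem_of_superset hU ?_, mem_of_superset hV ?_⟩
  · exact (left_subset_compRel hGr).trans hsub
  · exact (right_subset_compRel hFr).trans hsub

theorem refl_fComp {F G : Filter (α × α)} (hF : 𝓟 SetRel.id ≤ F) (hG : 𝓟 SetRel.id ≤ G) :
    𝓟 SetRel.id ≤ fComp F G := by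
  refine principal_le_iff.2 fun s hs => ?_
  rcases mem_fComp.1 hs with ⟨U, hU, V, hV, hsub⟩
  have hU' : SetRel.id ⊆ U := (principal_le_iff.1 hF) U hU
  have hV' : SetRel.id ⊆ V := (principal_le_iff.1 hG) V hV
  intro p hp
  have h : p.1 = p.2 := mem_idRel.1 hp
  exact hsub ⟨p.1, hU' (mem_idRel.2 rfl), hV' (mem_idRel.2 h)⟩

theorem fComp_sup_left {F G K : Filter (α × α)} :
    fComp (F ⊔ G) K ≤ fComp F K ⊔ fComp G K := by
  intro s hs
  rcases mem_sup.1 hs with ⟨h1, h2⟩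
  rcases mem_fComp.1 h1 with ⟨U1, hU1, V1, hV1, hs1⟩
  rcases mem_fComp.1 h2 with ⟨U2, hU2, V2, hV2, hs2⟩
  refine mem_fComp.2 ⟨U1 ∪ U2,
    mem_sup.2 ⟨mem_of_superset hU1 subset_union_left, mem_of_superset hU2 subset_union_right⟩,
    V1 ∩ V2, inter_mem hV1 hV2, ?_⟩
  rintro ⟨a, b⟩ ⟨c, hc, hcb⟩
  rcases hc with hc | hc
  · exact hs1 ⟨c, hc, hcb.1⟩
  · exact hs2 ⟨c, hc, hcb.2⟩

theorem fComp_sup_right {F G K : Filter (α × α)} :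
    fComp K (F ⊔ G) ≤ fComp K F ⊔ fComp K G := by
  intro s hs
  rcases mem_sup.1 hs with ⟨h1, h2⟩
  rcases mem_fComp.1 h1 with ⟨U1, hU1, V1, hV1, hs1⟩
  rcases mem_fComp.1 h2 with ⟨U2, hU2, V2, hV2, hs2⟩
  refine mem_fComp.2 ⟨U1 ∩ U2, inter_mem hU1 hU2, V1 ∪ V2,
    mem_sup.2 ⟨mem_of_superset hV1 subset_union_left, mem_of_superset hV2 subset_union_right⟩, ?_⟩
  rintro ⟨a, b⟩ ⟨c, hc, hcb⟩
  rcases hcb with h | h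
  · exact hs1 ⟨c, hc.1, h⟩
  · exact hs2 ⟨c, hc.2, h⟩

theorem fComp_bot_left {K : Filter (α × α)} : fComp ⊥ K = ⊥ := by
  refine le_antisymm (fun s _ => ?_) bot_le
  refine mem_fComp.2 ⟨∅, mem_bot, univ, univ_mem, ?_⟩
  rintro ⟨a, b⟩ ⟨c, hc, -⟩
  exact absurd hc (notMem_empty _)

theorem fComp_bot_right {K : Filter (α × α)} : fComp K ⊥ = ⊥ := by
  refine le_antisymm (fun s _ => ?_) bot_le
  refine mem_fComp.2 ⟨univ, univ_mem, ∅, mem_bot, ?_⟩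
  rintro ⟨a, b⟩ ⟨c, -, hc⟩
  exact absurd hc (notMem_empty _)

/-! ### swap lemmas -/

theorem mem_swF {F : Filter (α × α)} {s : Set (α × α)} :
    s ∈ Filter.map Prod.swap F ↔ Prod.swap ⁻¹' s ∈ F := Iff.rfl

theorem swap_preimage_compRel (U V : Set (α × α)) :
    Prod.swap ⁻¹' (U ○ V) = (Prod.swap ⁻¹' V) ○ (Prod.swap ⁻¹' U) := by
  ext ⟨a, b⟩
  constructor
  · rintro ⟨z, h1, h2⟩
    exact ⟨z, h2, h1⟩
  · rintro ⟨z, h1, h2⟩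
    exact ⟨z, h2, h1⟩

theorem swF_swF (F : Filter (α × α)) : Filter.map Prod.swap (Filter.map Prod.swap F) = F := by
  rw [Filter.map_map]
  have : (Prod.swap ∘ Prod.swap : α × α → α × α) = id := funext fun p => Prod.swap_swap p
  rw [this, Filter.map_id]

theorem swF_fComp (F G : Filter (α × α)) :
    Filter.map Prod.swap (fComp F G) = fComp (Filter.map Prod.swap G) (Filter.map Prod.swap F) := by
  ext s
  constructor
  · intro hs
    rcases mem_fComp.1 (mem_swF.1 hs) with ⟨U, hU, V, hV, hsub⟩
    refine mem_fComp.2 ⟨Prod.swap ⁻¹' V, ?_, Prod.swap ⁻¹' U, ?_, ?_⟩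
    · rw [mem_swF, Set.preimage_preimage]
      simpa using hV
    · rw [mem_swF, Set.preimage_preimage]
      simpa using hU
    · rw [← swap_preimage_compRel]
      intro p hp
      have : p.swap ∈ Prod.swap ⁻¹' s := hsub hp
      simpa using this
  · intro hs
    rcases mem_fComp.1 hs with ⟨V, hV, U, hU, hsub⟩
    refine mem_swF.2 (mem_fComp.2 ⟨Prod.swap ⁻¹' U, hU, Prod.swap ⁻¹' V, hV, ?_⟩)
    intro p hp
    have h2 : p ∈ Prod.swap ⁻¹' (V ○ U) := by
      rw [swap_preimage_compRel]
      exact hp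
    exact hsub h2

theorem swF_idRel : Filter.map Prod.swap (𝓟 (SetRel.id : Set (α × α))) = 𝓟 SetRel.id := by
  rw [Filter.map_principal]
  congr 1
  exact swap_idRel

/-! ### filListComp and setListComp -/

theorem filListComp_cons (F : Filter (α × α)) (l : List (Filter (α × α))) :
    filListComp (F :: l) = fComp F (filListComp l) := by
  cases l with
  | nil => simp [filListComp, fComp_idRel_right]
  | cons G r => rfl

theorem filListComp_append (l₁ l₂ : List (Filter (α × α))) :
    filListComp (l₁ ++ l₂) = fComp (filListComp l₁) (filListComp l₂) := by
  induction l₁ with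
  | nil => simp [filListComp, fComp_idRel_left]
  | cons F r ih =>
      rw [List.cons_append, filListComp_cons, ih, filListComp_cons, fComp_assoc]

def setListComp : List (Set (α × α)) → Set (α × α)
  | [] => SetRel.id
  | U :: r => U ○ setListComp r

theorem mem_filListComp {l : List (Filter (α × α))} {s : Set (α × α)} :
    s ∈ filListComp l ↔
      ∃ ss : List (Set (α × α)), List.Forall₂ (· ∈ ·) ss l ∧ setListComp ss ⊆ s := by
  induction l generalizing s with
  | nil =>
      constructor
      · intro hs
        exact ⟨[], List.Forall₂.nil, mem_principal.1 hs⟩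
      · rintro ⟨ss, hss, hsub⟩
        cases hss
        exact mem_principal.2 hsub
  | cons F r ih =>
      rw [filListComp_cons]
      constructor
      · intro hs
        rcases mem_fComp.1 hs with ⟨U, hU, V, hV, hsub⟩
        rcases ih.1 hV with ⟨ss, hss, hsub'⟩
        exact ⟨U :: ss, List.Forall₂.cons hU hss,
          (compRel_mono Subset.rfl hsub').trans hsub⟩
      · rintro ⟨ss, hss, hsub⟩
        cases hss with
        | cons hU hss' =>
            rename_i U ss'
            exact mem_fComp.2 ⟨U, hU, setListComp ss', ih.2 ⟨ss', hss', Subset.rfl⟩, hsub⟩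

theorem setListComp_mem {l : List (Filter (α × α))} {ss : List (Set (α × α))}
    (h : List.Forall₂ (· ∈ ·) ss l) : setListComp ss ∈ filListComp l :=
  mem_filListComp.2 ⟨ss, h, Subset.rfl⟩

theorem filListComp_mono {l l' : List (Filter (α × α))}
    (h : List.Forall₂ (· ≤ ·) l l') : filListComp l ≤ filListComp l' := by
  induction h with
  | nil => exact le_rfl
  | cons h₁ h₂ ih =>
      rw [filListComp_cons, filListComp_cons]
      exact fComp_mono h₁ ih

theorem setListComp_append (s₁ s₂ : List (Set (α × α))) :
    setListComp (s₁ ++ s₂) = setListComp s₁ ○ setListComp s₂ := by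
  induction s₁ with
  | nil => simp [setListComp, id_compRel]
  | cons U r ih => simp [setListComp, ih, compRel_assoc]


/-! ### opImg / opFilter -/

theorem opImg_mono {A : Type*} {n : ℕ} {w : (Fin n → A) → A} {R R' : Fin n → Set (A × A)}
    (h : ∀ k, R k ⊆ R' k) : opImg w R ⊆ opImg w R' := by
  rintro p ⟨a, b, hab, rfl⟩
  exact ⟨a, b, fun k => h k (hab k), rfl⟩

theorem mem_opImg {A : Type*} {n : ℕ} {w : (Fin n → A) → A} {R : Fin n → Set (A × A)}
    {a b : Fin n → A} (h : ∀ k, (a k, b k) ∈ R k) : (w a, w b) ∈ opImg w R :=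
  ⟨a, b, h, rfl⟩

theorem mem_opFilter {A : Type*} {n : ℕ} {w : (Fin n → A) → A} {F : Fin n → Filter (A × A)}
    {s : Set (A × A)} :
    s ∈ opFilter w F ↔ ∃ S : Fin n → Set (A × A), (∀ k, S k ∈ F k) ∧ opImg w S ⊆ s := by
  constructor
  · intro hs
    rw [opFilter, Filter.mem_generate_iff] at hs
    rcases hs with ⟨t, htsub, htfin, hsub⟩
    -- choose generators for each element of t
    have : ∀ u ∈ t, ∃ S : Fin n → Set (A × A), (∀ k, S k ∈ F k) ∧ u = opImg w S := fun u hu =>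
      htsub hu
    choose! Sf hSf hSeq using this
    refine ⟨fun k => ⋂ u ∈ t, Sf u k, fun k => (Filter.biInter_mem htfin).2 fun u hu => hSf u hu k, ?_⟩
    refine Subset.trans ?_ hsub
    intro p hp
    refine mem_sInter.2 fun u hu => ?_
    rw [hSeq u hu]
    refine opImg_mono (fun k => ?_) hp
    exact fun q hq => by
      have := mem_iInter.1 hq
      exact mem_iInter.1 (this u) hu
  · rintro ⟨S, hS, hsub⟩
    rw [opFilter]
    refine Filter.mem_of_superset ?_ hsub
    exact Filter.mem_generate_of_mem ⟨S, hS, rfl⟩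

theorem opFilter_mono {A : Type*} {n : ℕ} {w : (Fin n → A) → A}
    {F F' : Fin n → Filter (A × A)} (h : ∀ k, F k ≤ F' k) :
    opFilter w F ≤ opFilter w F' := by
  intro s hs
  rcases mem_opFilter.1 hs with ⟨S, hS, hsub⟩
  exact mem_opFilter.2 ⟨S, fun k => h k (hS k), hsub⟩

section TermImg

variable {A : Type*} {ι : Type*} {ar : ι → ℕ} (ops : ∀ i, (Fin (ar i) → A) → A)

theorem opFilter_var_le {n : ℕ} (k : Fin n) (K : Fin n → Filter (A × A)) :
    opFilter (fun v => v k) K ≤ K k := by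
  intro s hs
  refine mem_opFilter.2 ⟨Function.update (fun _ => univ) k s, fun j => ?_, ?_⟩
  · rcases eq_or_ne j k with rfl | hne
    · simpa using hs
    · simp [Function.update_of_ne hne]
  · rintro p ⟨a, b, hab, rfl⟩
    have := hab k
    simpa using this

theorem opFilter_app_le {n : ℕ} (i : ι) (f : Fin (ar i) → (Fin n → A) → A)
    (K : Fin n → Filter (A × A)) :
    opFilter (fun v => ops i fun j => f j v) K ≤
      opFilter (ops i) (fun j => opFilter (f j) K) := by
  intro s hs
  rcases mem_opFilter.1 hs with ⟨T, hT, hsub⟩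
  have : ∀ j, ∃ S : Fin n → Set (A × A), (∀ k, S k ∈ K k) ∧ opImg (f j) S ⊆ T j := fun j =>
    mem_opFilter.1 (hT j)
  choose Sf hSf hSsub using this
  refine mem_opFilter.2 ⟨fun k => ⋂ j, Sf j k, fun k => Filter.iInter_mem.2 fun j => hSf j k, ?_⟩
  rintro p ⟨a, b, hab, rfl⟩
  refine hsub ?_
  refine ⟨fun j => f j a, fun j => f j b, fun j => ?_, rfl⟩
  exact hSsub j ⟨a, b, fun k => iInter_subset (fun j' => Sf j' k) j (hab k), rfl⟩

theorem opFilter_term_mem {E : Set (Filter (A × A))}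
    (hdown : ∀ F ∈ E, ∀ G ≤ F, G ∈ E) (hid : 𝓟 SetRel.id ∈ E)
    (hcomp : suCompatible ops E) :
    ∀ {n : ℕ} (t : Term ι ar n) (K : Fin n → Filter (A × A)), (∀ k, K k ∈ E) →
      opFilter (fun v => Term.eval ops v t) K ∈ E := by
  intro n t
  induction t with
  | var k =>
      intro K hK
      exact hdown (K k) (hK k) _ (opFilter_var_le k K)
  | app i ts ih =>
      intro K hK
      have hle : opFilter (fun v => Term.eval ops v (Term.app i ts)) K ≤
          opFilter (ops i) (fun j => opFilter (fun v => Term.eval ops v (ts j)) K) := by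
        exact opFilter_app_le ops i (fun j v => Term.eval ops v (ts j)) K
      exact hdown _ (hcomp i _ fun j => ih j K hK) _ hle

end TermImg


/-! ### the generated ideal `filIdealGen (filComps X)` -/

section Join

variable {X : Set (Filter (α × α))}

theorem mem_filComps_of_mem {K : Filter (α × α)} (h : K ∈ X) : K ∈ filComps X :=
  ⟨[K], by simp, by simpa using h, rfl⟩

theorem filComps_fComp {C D : Filter (α × α)} (hC : C ∈ filComps X) (hD : D ∈ filComps X) :
    fComp C D ∈ filComps X := by
  rcases hC with ⟨l₁, hl₁, hm₁, rfl⟩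
  rcases hD with ⟨l₂, hl₂, hm₂, rfl⟩
  refine ⟨l₁ ++ l₂, by simp [hl₁], ?_, (filListComp_append l₁ l₂).symm⟩
  intro F hF
  rcases List.mem_append.1 hF with h | h
  · exact hm₁ F h
  · exact hm₂ F h

theorem J_down {H H' : Filter (α × α)} (h : H ∈ filIdealGen (filComps X)) (hle : H' ≤ H) :
    H' ∈ filIdealGen (filComps X) := by
  rcases h with ⟨s, hs, hle'⟩
  exact ⟨s, hs, hle.trans hle'⟩

theorem mem_J_of_mem {K : Filter (α × α)} (h : K ∈ X) : K ∈ filIdealGen (filComps X) := by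
  refine ⟨{K}, ?_, by simp⟩
  intro C hC
  simp only [Finset.coe_singleton, Set.mem_singleton_iff] at hC
  subst hC
  exact mem_filComps_of_mem h

theorem J_sup {H H' : Filter (α × α)} (h : H ∈ filIdealGen (filComps X))
    (h' : H' ∈ filIdealGen (filComps X)) : H ⊔ H' ∈ filIdealGen (filComps X) := by
  rcases h with ⟨s, hs, hle⟩
  rcases h' with ⟨s', hs', hle'⟩
  refine ⟨s ∪ s', ?_, ?_⟩
  · intro C hC
    rcases Finset.mem_coe.1 hC with hC'
    rcases Finset.mem_union.1 hC' with h | h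
    · exact hs (Finset.mem_coe.2 h)
    · exact hs' (Finset.mem_coe.2 h)
  · rw [Finset.sup_union]
    exact sup_le_sup hle hle'

theorem sup_fComp_le (s : Finset (Filter (α × α))) (K : Filter (α × α)) :
    fComp (s.sup id) K ≤ s.sup fun C => fComp C K := by
  induction s using Finset.induction_on with
  | empty => simp [fComp_bot_left]
  | insert C s' hni ih =>
      rw [Finset.sup_insert, Finset.sup_insert]
      exact le_trans fComp_sup_left (sup_le_sup le_rfl ih)

theorem fComp_sup_le (K : Filter (α × α)) (s : Finset (Filter (α × α))) :
    fComp K (s.sup id) ≤ s.sup fun D => fComp K D := by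
  induction s using Finset.induction_on with
  | empty => simp [fComp_bot_right]
  | insert D s' hni ih =>
      rw [Finset.sup_insert, Finset.sup_insert]
      exact le_trans fComp_sup_right (sup_le_sup le_rfl ih)

theorem J_fComp {H H' : Filter (α × α)} (h : H ∈ filIdealGen (filComps X))
    (h' : H' ∈ filIdealGen (filComps X)) : fComp H H' ∈ filIdealGen (filComps X) := by
  rcases h with ⟨s, hs, hle⟩
  rcases h' with ⟨s', hs', hle'⟩
  refine ⟨(s ×ˢ s').image fun p => fComp p.1 p.2, ?_, ?_⟩
  · intro C hC
    rcases Finset.mem_coe.1 hC with hC'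
    rcases Finset.mem_image.1 hC' with ⟨p, hp, rfl⟩
    rcases Finset.mem_product.1 hp with ⟨h1, h2⟩
    exact filComps_fComp (hs (Finset.mem_coe.2 h1)) (hs' (Finset.mem_coe.2 h2))
  · refine le_trans (fComp_mono hle hle') ?_
    refine le_trans (sup_fComp_le s (s'.sup id)) ?_
    refine Finset.sup_le fun C hC => ?_
    refine le_trans (fComp_sup_le C s') ?_
    refine Finset.sup_le fun D hD => ?_
    have : fComp C D ∈ (s ×ˢ s').image fun p => fComp p.1 p.2 :=
      Finset.mem_image.2 ⟨(C, D), Finset.mem_product.2 ⟨hC, hD⟩, rfl⟩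
    exact Finset.le_sup (f := id) this

theorem J_listcomp (hid : 𝓟 SetRel.id ∈ X) {l : List (Filter (α × α))}
    (h : ∀ K ∈ l, K ∈ filIdealGen (filComps X)) :
    filListComp l ∈ filIdealGen (filComps X) := by
  induction l with
  | nil => exact mem_J_of_mem hid
  | cons F r ih =>
      rw [filListComp_cons]
      exact J_fComp (h F (List.mem_cons_self)) (ih fun K hK => h K (List.mem_cons_of_mem _ hK))

theorem swF_filListComp (l : List (Filter (α × α))) :
    Filter.map Prod.swap (filListComp l) =
      filListComp ((l.map (Filter.map Prod.swap)).reverse) := by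
  induction l with
  | nil => simpa [filListComp] using swF_idRel
  | cons F r ih =>
      rw [filListComp_cons, swF_fComp, ih, List.map_cons, List.reverse_cons,
        filListComp_append]
      simp [filListComp]

theorem swF_sup_le (s : Finset (Filter (α × α))) :
    Filter.map Prod.swap (s.sup id) ≤ (s.image (Filter.map Prod.swap)).sup id := by
  induction s using Finset.induction_on with
  | empty => simp
  | insert C s' hni ih =>
      rw [Finset.sup_insert, Finset.image_insert, Finset.sup_insert, Filter.map_sup]
      exact sup_le_sup le_rfl ih

theorem J_swap (hX : ∀ K ∈ X, Filter.map Prod.swap K ∈ X) {H : Filter (α × α)}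
    (h : H ∈ filIdealGen (filComps X)) :
    Filter.map Prod.swap H ∈ filIdealGen (filComps X) := by
  rcases h with ⟨s, hs, hle⟩
  refine ⟨s.image (Filter.map Prod.swap), ?_, ?_⟩
  · intro C hC
    rcases Finset.mem_coe.1 hC with hC'
    rcases Finset.mem_image.1 hC' with ⟨D, hD, rfl⟩
    rcases hs (Finset.mem_coe.2 hD) with ⟨l, hl, hm, rfl⟩
    rw [swF_filListComp]
    refine ⟨(l.map (Filter.map Prod.swap)).reverse, by simp [hl], ?_, rfl⟩
    intro F hF
    rcases List.mem_reverse.1 hF with hF'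
    rcases List.mem_map.1 hF' with ⟨G, hG, rfl⟩
    exact hX G (hm G hG)
  · exact le_trans (Filter.map_mono hle) (swF_sup_le s)

end Join


/-! ### core-shaped compositions -/

def coreComp (Y0 : Filter (α × α)) : List (Filter (α × α) × Filter (α × α)) → Filter (α × α)
  | [] => Y0
  | p :: t => fComp Y0 (fComp p.1 (coreComp p.2 t))

theorem coreComp_fComp (K Y0 : Filter (α × α)) (t : List (Filter (α × α) × Filter (α × α))) :
    coreComp (fComp K Y0) t = fComp K (coreComp Y0 t) := by
  cases t with
  | nil => rfl
  | cons p r => simp only [coreComp, fComp_assoc]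

def tailSet : List (Set (α × α) × Set (α × α)) → Set (α × α)
  | [] => SetRel.id
  | s :: r => s.1 ○ (s.2 ○ tailSet r)

theorem mem_coreComp {Y0 : Filter (α × α)} {t : List (Filter (α × α) × Filter (α × α))}
    {s : Set (α × α)} :
    s ∈ coreComp Y0 t ↔ ∃ V0 ∈ Y0, ∃ tl : List (Set (α × α) × Set (α × α)),
      List.Forall₂ (fun sp p => sp.1 ∈ p.1 ∧ sp.2 ∈ p.2) tl t ∧ V0 ○ tailSet tl ⊆ s := by
  induction t generalizing Y0 s with
  | nil =>
      constructor
      · intro hs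
        exact ⟨s, hs, [], List.Forall₂.nil, by rw [tailSet, compRel_idRel]⟩
      · rintro ⟨V0, hV0, tl, htl, hsub⟩
        cases htl
        rw [tailSet, compRel_idRel] at hsub
        exact mem_of_superset hV0 hsub
  | cons p r ih =>
      constructor
      · intro hs
        rcases mem_fComp.1 hs with ⟨V0, hV0, W, hW, hsub⟩
        rcases mem_fComp.1 hW with ⟨U, hU, W', hW', hsub'⟩
        rcases ih.1 hW' with ⟨V1, hV1, tl, htl, hsub''⟩
        refine ⟨V0, hV0, (U, V1) :: tl, List.Forall₂.cons ⟨hU, hV1⟩ htl, ?_⟩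
        have h1 : U ○ (V1 ○ tailSet tl) ⊆ U ○ W' := compRel_mono Subset.rfl hsub''
        have h2 : U ○ W' ⊆ W := hsub'
        calc V0 ○ tailSet ((U, V1) :: tl) = V0 ○ (U ○ (V1 ○ tailSet tl)) := rfl
          _ ⊆ V0 ○ W := compRel_mono Subset.rfl (h1.trans h2)
          _ ⊆ s := hsub
      · rintro ⟨V0, hV0, tl, htl, hsub⟩
        cases htl with
        | cons hp htl' =>
            rename_i sp tl'
            refine mem_fComp.2 ⟨V0, hV0, sp.1 ○ (sp.2 ○ tailSet tl'), ?_, hsub⟩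
            exact mem_fComp.2 ⟨sp.1, hp.1, sp.2 ○ tailSet tl',
              ih.2 ⟨sp.2, hp.2, tl', htl', Subset.rfl⟩, Subset.rfl⟩

theorem tailSet_mono {tl tl' : List (Set (α × α) × Set (α × α))}
    (h : List.Forall₂ (fun a b => a.1 ⊆ b.1 ∧ a.2 ⊆ b.2) tl tl') :
    tailSet tl ⊆ tailSet tl' := by
  induction h with
  | nil => exact Subset.rfl
  | cons h₁ h₂ ih =>
      exact compRel_mono h₁.1 (compRel_mono h₁.2 ih)

theorem refl_filListComp {l : List (Filter (α × α))} (h : ∀ K ∈ l, 𝓟 SetRel.id ≤ K) :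
    𝓟 SetRel.id ≤ filListComp l := by
  induction l with
  | nil => exact le_rfl
  | cons F r ih =>
      rw [filListComp_cons]
      exact refl_fComp (h F (List.mem_cons_self)) (ih fun K hK => h K (List.mem_cons_of_mem _ hK))


/-! ### Day-term machinery -/

section Day

variable {A : Type*} {ι : Type*} {ar : ι → ℕ}

/-- evaluation of the `k`-th Day term as an operation -/
def DM (ops : ∀ i, (Fin (ar i) → A) → A) (m : ℕ → Term ι ar 4) (k : ℕ) : (Fin 4 → A) → A :=
  fun v => Term.eval ops v (m k)

variable (ops : ∀ i, (Fin (ar i) → A) → A) (m : ℕ → Term ι ar 4)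

/-- slot-2 image of the swap of `K` -/
def o2s (k : ℕ) (K : Filter (A × A)) : Filter (A × A) :=
  opFilter (DM ops m k) ![𝓟 SetRel.id, Filter.map Prod.swap K, 𝓟 SetRel.id, 𝓟 SetRel.id]

/-- slot-3 image of `K` -/
def o3 (k : ℕ) (K : Filter (A × A)) : Filter (A × A) :=
  opFilter (DM ops m k) ![𝓟 SetRel.id, 𝓟 SetRel.id, K, 𝓟 SetRel.id]

/-- slot-3 image of the swap of `K` -/
def o3s (k : ℕ) (K : Filter (A × A)) : Filter (A × A) :=
  opFilter (DM ops m k) ![𝓟 SetRel.id, 𝓟 SetRel.id, Filter.map Prod.swap K, 𝓟 SetRel.id]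

/-- slot-4 image of `K` -/
def o4 (k : ℕ) (K : Filter (A × A)) : Filter (A × A) :=
  opFilter (DM ops m k) ![𝓟 SetRel.id, 𝓟 SetRel.id, 𝓟 SetRel.id, K]

/-- slot-4 image of the swap of `K` -/
def o4s (k : ℕ) (K : Filter (A × A)) : Filter (A × A) :=
  opFilter (DM ops m k) ![𝓟 SetRel.id, 𝓟 SetRel.id, 𝓟 SetRel.id, Filter.map Prod.swap K]

theorem vec4_mem_class {E : Set (Filter (A × A))} {K0 K1 K2 K3 : Filter (A × A)}
    (h0 : K0 ∈ E) (h1 : K1 ∈ E) (h2 : K2 ∈ E) (h3 : K3 ∈ E) :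
    ∀ j, (![K0, K1, K2, K3]) j ∈ E := by
  intro j
  fin_cases j <;> simpa

theorem oFilter_mem {E : Set (Filter (A × A))}
    (hdown : ∀ F ∈ E, ∀ G ≤ F, G ∈ E) (hid : 𝓟 SetRel.id ∈ E) (hcomp : suCompatible ops E)
    {K : Fin 4 → Filter (A × A)} (hK : ∀ j, K j ∈ E) (k : ℕ) :
    opFilter (DM ops m k) K ∈ E :=
  opFilter_term_mem ops hdown hid hcomp (m k) K hK

theorem extract4 {w : (Fin 4 → A) → A} {F0 F1 F2 F3 : Filter (A × A)} {S : Set (A × A)}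
    (hS : S ∈ opFilter w ![F0, F1, F2, F3]) :
    ∃ R : Fin 4 → Set (A × A),
      R 0 ∈ F0 ∧ R 1 ∈ F1 ∧ R 2 ∈ F2 ∧ R 3 ∈ F3 ∧ opImg w R ⊆ S := by
  rcases mem_opFilter.1 hS with ⟨R, hR, hsub⟩
  refine ⟨R, ?_, ?_, ?_, ?_, hsub⟩
  · simpa using hR 0
  · simpa using hR 1
  · simpa using hR 2
  · simpa using hR 3

theorem opImg4_pair {w : (Fin 4 → A) → A} {R : Fin 4 → Set (A × A)}
    {a0 a1 a2 a3 b0 b1 b2 b3 : A}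
    (h0 : (a0, b0) ∈ R 0) (h1 : (a1, b1) ∈ R 1) (h2 : (a2, b2) ∈ R 2) (h3 : (a3, b3) ∈ R 3) :
    (w ![a0, a1, a2, a3], w ![b0, b1, b2, b3]) ∈ opImg w R := by
  refine ⟨![a0, a1, a2, a3], ![b0, b1, b2, b3], ?_, rfl⟩
  intro k
  fin_cases k <;> simpa

theorem diag_mem {R : Set (A × A)} (h : SetRel.id ⊆ R) (c : A) : (c, c) ∈ R :=
  h rfl

theorem swap_preimage_mem {K : Filter (A × A)} {R : Set (A × A)}
    (h : R ∈ Filter.map Prod.swap K) : Prod.swap ⁻¹' R ∈ K := h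

theorem mem_of_swap_preimage {R : Set (A × A)} {g h : A}
    (hm : (g, h) ∈ Prod.swap ⁻¹' R) : (h, g) ∈ R := hm

end Day


/-! ### chase packages -/

section Pkg

variable {A : Type*}

/-- A package of extracted sets used in the element chase. -/
structure Pkg (Y0f Af Y1f Hf : Filter (A × A))
    (t' : List (Filter (A × A) × Filter (A × A))) where
  V0 : Set (A × A)
  UA : Set (A × A)
  V1 : Set (A × A)
  T1 : Set (A × A)
  T2 : Set (A × A)
  T3 : Set (A × A)
  tl : List (Set (A × A) × Set (A × A))
  hV0 : V0 ∈ Y0f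
  hUA : UA ∈ Af
  hV1 : V1 ∈ Y1f
  hT1 : T1 ∈ Hf
  hT2 : T2 ∈ Hf
  hT3 : T3 ∈ Hf
  htl : List.Forall₂ (fun sp p => sp.1 ∈ p.1 ∧ sp.2 ∈ p.2) tl t'

variable {Y0f Af Y1f Hf : Filter (A × A)} {t' : List (Filter (A × A) × Filter (A × A))}

def Pkg.Pred (p : Pkg Y0f Af Y1f Hf t') (a g h b : A) : Prop :=
  (a, g) ∈ p.V0 ∧ (g, h) ∈ p.UA ∧ (h, b) ∈ p.V1 ○ tailSet p.tl ∧
    (a, b) ∈ p.T1 ∧ (a, b) ∈ p.T2 ∧ (a, b) ∈ p.T3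

theorem univTl_forall₂ (t'' : List (Filter (A × A) × Filter (A × A))) :
    List.Forall₂ (fun (sp : Set (A × A) × Set (A × A)) p => sp.1 ∈ p.1 ∧ sp.2 ∈ p.2)
      (t''.map fun _ => (univ, univ)) t'' := by
  induction t'' with
  | nil => exact List.Forall₂.nil
  | cons p r ih => exact List.Forall₂.cons ⟨univ_mem, univ_mem⟩ ih

def Pkg.univPkg : Pkg Y0f Af Y1f Hf t' where
  V0 := univ
  UA := univ
  V1 := univ
  T1 := univ
  T2 := univ
  T3 := univ
  tl := t'.map fun _ => (univ, univ)
  hV0 := univ_mem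
  hUA := univ_mem
  hV1 := univ_mem
  hT1 := univ_mem
  hT2 := univ_mem
  hT3 := univ_mem
  htl := univTl_forall₂ t'

theorem zip_forall₂ {tl₁ tl₂ : List (Set (A × A) × Set (A × A))}
    (h₁ : List.Forall₂ (fun sp p => sp.1 ∈ p.1 ∧ sp.2 ∈ p.2) tl₁ t')
    (h₂ : List.Forall₂ (fun sp p => sp.1 ∈ p.1 ∧ sp.2 ∈ p.2) tl₂ t') :
    List.Forall₂ (fun sp p => sp.1 ∈ p.1 ∧ sp.2 ∈ p.2)
      (List.zipWith (fun u v => (u.1 ∩ v.1, u.2 ∩ v.2)) tl₁ tl₂) t' := by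
  induction h₁ generalizing tl₂ with
  | nil =>
      cases h₂
      exact List.Forall₂.nil
  | cons hp hr ih =>
      cases h₂ with
      | cons hp' hr' =>
          exact List.Forall₂.cons ⟨inter_mem hp.1 hp'.1, inter_mem hp.2 hp'.2⟩ (ih hr')

theorem zip_subset_left {tl₁ tl₂ : List (Set (A × A) × Set (A × A))}
    (h₁ : List.Forall₂ (fun sp p => sp.1 ∈ p.1 ∧ sp.2 ∈ p.2) tl₁ t')
    (h₂ : List.Forall₂ (fun sp p => sp.1 ∈ p.1 ∧ sp.2 ∈ p.2) tl₂ t') :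
    List.Forall₂ (fun a b => a.1 ⊆ b.1 ∧ a.2 ⊆ b.2)
      (List.zipWith (fun u v => (u.1 ∩ v.1, u.2 ∩ v.2)) tl₁ tl₂) tl₁ := by
  induction h₁ generalizing tl₂ with
  | nil =>
      cases h₂
      exact List.Forall₂.nil
  | cons hp hr ih =>
      cases h₂ with
      | cons hp' hr' =>
          exact List.Forall₂.cons ⟨inter_subset_left, inter_subset_left⟩ (ih hr')

theorem zip_subset_right {tl₁ tl₂ : List (Set (A × A) × Set (A × A))}
    (h₁ : List.Forall₂ (fun sp p => sp.1 ∈ p.1 ∧ sp.2 ∈ p.2) tl₁ t')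
    (h₂ : List.Forall₂ (fun sp p => sp.1 ∈ p.1 ∧ sp.2 ∈ p.2) tl₂ t') :
    List.Forall₂ (fun a b => a.1 ⊆ b.1 ∧ a.2 ⊆ b.2)
      (List.zipWith (fun u v => (u.1 ∩ v.1, u.2 ∩ v.2)) tl₁ tl₂) tl₂ := by
  induction h₁ generalizing tl₂ with
  | nil =>
      cases h₂
      exact List.Forall₂.nil
  | cons hp hr ih =>
      cases h₂ with
      | cons hp' hr' =>
          exact List.Forall₂.cons ⟨inter_subset_right, inter_subset_right⟩ (ih hr')

def Pkg.inter (p q : Pkg Y0f Af Y1f Hf t') : Pkg Y0f Af Y1f Hf t' where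
  V0 := p.V0 ∩ q.V0
  UA := p.UA ∩ q.UA
  V1 := p.V1 ∩ q.V1
  T1 := p.T1 ∩ q.T1
  T2 := p.T2 ∩ q.T2
  T3 := p.T3 ∩ q.T3
  tl := List.zipWith (fun u v => (u.1 ∩ v.1, u.2 ∩ v.2)) p.tl q.tl
  hV0 := inter_mem p.hV0 q.hV0
  hUA := inter_mem p.hUA q.hUA
  hV1 := inter_mem p.hV1 q.hV1
  hT1 := inter_mem p.hT1 q.hT1
  hT2 := inter_mem p.hT2 q.hT2
  hT3 := inter_mem p.hT3 q.hT3
  htl := zip_forall₂ p.htl q.htl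

theorem Pkg.pred_inter_left {p q : Pkg Y0f Af Y1f Hf t'} {a g h b : A}
    (hp : (p.inter q).Pred a g h b) : p.Pred a g h b := by
  obtain ⟨h0, h1, h2, h3, h4, h5⟩ := hp
  refine ⟨h0.1, h1.1, ?_, h3.1, h4.1, h5.1⟩
  exact compRel_mono inter_subset_left (tailSet_mono (zip_subset_left p.htl q.htl)) h2

theorem Pkg.pred_inter_right {p q : Pkg Y0f Af Y1f Hf t'} {a g h b : A}
    (hp : (p.inter q).Pred a g h b) : q.Pred a g h b := by
  obtain ⟨h0, h1, h2, h3, h4, h5⟩ := hp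
  refine ⟨h0.2, h1.2, ?_, h3.2, h4.2, h5.2⟩
  exact compRel_mono inter_subset_right (tailSet_mono (zip_subset_right p.htl q.htl)) h2

def Pkg.ofUA {U : Set (A × A)} (hU : U ∈ Af) : Pkg Y0f Af Y1f Hf t' where
  V0 := univ
  UA := U
  V1 := univ
  T1 := univ
  T2 := univ
  T3 := univ
  tl := t'.map fun _ => (univ, univ)
  hV0 := univ_mem
  hUA := hU
  hV1 := univ_mem
  hT1 := univ_mem
  hT2 := univ_mem
  hT3 := univ_mem
  htl := univTl_forall₂ t' 

end Pkg


/-! ### verification lemmas -/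

section Verif

variable {A : Type*} {ι : Type*} {ar : ι → ℕ}
variable (ops : ∀ i, (Fin (ar i) → A) → A) (m : ℕ → Term ι ar 4)

theorem VX {Af : Filter (A × A)} {k : ℕ} {SX : Set (A × A)} (hSX : SX ∈ o3s ops m k Af) :
    ∃ U ∈ Af, ∀ a g h b : A, (g, h) ∈ U →
      (DM ops m k ![a, g, h, b], DM ops m k ![a, g, g, b]) ∈ SX := by
  rcases extract4 hSX with ⟨R, h0, h1, h2, h3, hsub⟩
  refine ⟨Prod.swap ⁻¹' R 2, h2, fun a g h b hgh => ?_⟩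
  exact hsub (opImg4_pair (diag_mem (mem_principal.1 h0) a) (diag_mem (mem_principal.1 h1) g)
    (mem_of_swap_preimage hgh) (diag_mem (mem_principal.1 h3) b))

theorem VX' {Af : Filter (A × A)} {k : ℕ} {SX : Set (A × A)} (hSX : SX ∈ o3 ops m k Af) :
    ∃ U ∈ Af, ∀ a g h b : A, (g, h) ∈ U →
      (DM ops m k ![a, g, g, b], DM ops m k ![a, g, h, b]) ∈ SX := by
  rcases extract4 hSX with ⟨R, h0, h1, h2, h3, hsub⟩
  refine ⟨R 2, h2, fun a g h b hgh => ?_⟩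
  exact hsub (opImg4_pair (diag_mem (mem_principal.1 h0) a) (diag_mem (mem_principal.1 h1) g)
    hgh (diag_mem (mem_principal.1 h3) b))

theorem VTAIL {k : ℕ} :
    ∀ (t'' : List (Filter (A × A) × Filter (A × A))) (cs : List (Set (A × A) × Set (A × A))),
    List.Forall₂ (fun sp p => sp.1 ∈ p.1 ∧ sp.2 ∈ p.2) cs
      (t''.map fun p => (o3 ops m k p.1, o3 ops m k p.2)) →
    ∃ tl, List.Forall₂ (fun sp p => sp.1 ∈ p.1 ∧ sp.2 ∈ p.2) tl t'' ∧
      ∀ a b p q : A, (p, q) ∈ tailSet tl →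
        (DM ops m k ![a, a, p, b], DM ops m k ![a, a, q, b]) ∈ tailSet cs := by
  intro t''
  induction t'' with
  | nil =>
      intro cs hcs
      rw [List.map_nil] at hcs
      cases hcs
      refine ⟨[], List.Forall₂.nil, fun a b p q hpq => ?_⟩
      have hq : p = q := mem_idRel.1 hpq
      subst hq
      exact mem_idRel.2 rfl
  | cons pf r ih =>
      intro cs hcs
      rw [List.map_cons] at hcs
      cases hcs with
      | cons hcp hcs' =>
          rename_i cp cs'
          rcases extract4 hcp.1 with ⟨Ru, hu0, hu1, hu2, hu3, hsubU⟩
          rcases extract4 hcp.2 with ⟨Rv, hv0, hv1, hv2, hv3, hsubV⟩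
          rcases ih cs' hcs' with ⟨tl', htl', himp⟩
          refine ⟨(Ru 2, Rv 2) :: tl', List.Forall₂.cons ⟨hu2, hv2⟩ htl', ?_⟩
          rintro a b p q ⟨g', hpg', h', hg'h', htail⟩
          have e1 : (DM ops m k ![a, a, p, b], DM ops m k ![a, a, g', b]) ∈ cp.1 :=
            hsubU (opImg4_pair (diag_mem (mem_principal.1 hu0) a)
              (diag_mem (mem_principal.1 hu1) a) hpg' (diag_mem (mem_principal.1 hu3) b))
          have e2 : (DM ops m k ![a, a, g', b], DM ops m k ![a, a, h', b]) ∈ cp.2 :=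
            hsubV (opImg4_pair (diag_mem (mem_principal.1 hv0) a)
              (diag_mem (mem_principal.1 hv1) a) hg'h' (diag_mem (mem_principal.1 hv3) b))
          have e3 := himp a b h' q htail
          exact prod_mk_mem_compRel e1 (prod_mk_mem_compRel e2 e3)

theorem VC {Y0f Y1f : Filter (A × A)} {t' : List (Filter (A × A) × Filter (A × A))}
    {k : ℕ} {SC : Set (A × A)}
    (hSC : SC ∈ coreComp (fComp (o2s ops m k Y0f) (o3 ops m k Y1f))
      (t'.map fun p => (o3 ops m k p.1, o3 ops m k p.2))) :
    ∃ V0 ∈ Y0f, ∃ V1 ∈ Y1f,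
      ∃ tl, List.Forall₂ (fun sp p => sp.1 ∈ p.1 ∧ sp.2 ∈ p.2) tl t' ∧
      ∀ a g h b : A, (a, g) ∈ V0 → (h, b) ∈ V1 ○ tailSet tl →
        (DM ops m k ![a, g, h, b], DM ops m k ![a, a, b, b]) ∈ SC := by
  rcases mem_coreComp.1 hSC with ⟨V0', hV0', cs, hcs, hsub⟩
  rcases mem_fComp.1 hV0' with ⟨Sα, hSα, Sβ, hSβ, hsubαβ⟩
  rcases extract4 hSα with ⟨Rα, ha0, ha1, ha2, ha3, hsubα⟩
  rcases extract4 hSβ with ⟨Rβ, hb0, hb1, hb2, hb3, hsubβ⟩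
  rcases VTAIL ops m t' cs hcs with ⟨tl, htl, himp⟩
  refine ⟨Prod.swap ⁻¹' Rα 1, ha1, Rβ 2, hb2, tl, htl, ?_⟩
  rintro a g h b hag ⟨g₂, hhg₂, hg₂b⟩
  have e1 : (DM ops m k ![a, g, h, b], DM ops m k ![a, a, h, b]) ∈ Sα :=
    hsubα (opImg4_pair (diag_mem (mem_principal.1 ha0) a) (mem_of_swap_preimage hag)
      (diag_mem (mem_principal.1 ha2) h) (diag_mem (mem_principal.1 ha3) b))
  have e2 : (DM ops m k ![a, a, h, b], DM ops m k ![a, a, g₂, b]) ∈ Sβ :=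
    hsubβ (opImg4_pair (diag_mem (mem_principal.1 hb0) a)
      (diag_mem (mem_principal.1 hb1) a) hhg₂ (diag_mem (mem_principal.1 hb3) b))
  have e3 := himp a b g₂ b hg₂b
  have : (DM ops m k ![a, g, h, b], DM ops m k ![a, a, b, b]) ∈ Sα ○ (Sβ ○ tailSet cs) :=
    prod_mk_mem_compRel e1 (prod_mk_mem_compRel e2 e3)
  rw [← compRel_assoc] at this
  exact hsub (compRel_mono hsubαβ Subset.rfl this)

theorem VZ {Af Hf : Filter (A × A)} {k d : ℕ}
    (hanchor : ∀ i ≤ d, ∀ u v : A, DM ops m i ![u, v, v, u] = u) (hk : k ≤ d)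
    {SZ : Set (A × A)}
    (hSZ : SZ ∈ fComp (o3s ops m k Af)
      (fComp (o4s ops m k Hf) (fComp (o4 ops m k Hf) (o3 ops m k Hf)))) :
    ∃ U ∈ Af, ∃ T1 ∈ Hf, ∃ T2 ∈ Hf, ∃ T3 ∈ Hf,
      ∀ a g h b : A, (g, h) ∈ U → (a, b) ∈ T1 → (a, b) ∈ T2 → (a, b) ∈ T3 →
        (DM ops m k ![a, g, h, b], DM ops m k ![a, a, b, b]) ∈ SZ := by
  rcases mem_fComp.1 hSZ with ⟨Sa, hSa, W1, hW1, hsub1⟩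
  rcases mem_fComp.1 hW1 with ⟨Sb, hSb, W2, hW2, hsub2⟩
  rcases mem_fComp.1 hW2 with ⟨Sc, hSc, Sd, hSd, hsub3⟩
  rcases extract4 hSa with ⟨Ra, ha0, ha1, ha2, ha3, hsuba⟩
  rcases extract4 hSb with ⟨Rb, hb0, hb1, hb2, hb3, hsubb⟩
  rcases extract4 hSc with ⟨Rc, hc0, hc1, hc2, hc3, hsubc⟩
  rcases extract4 hSd with ⟨Rd, hd0, hd1, hd2, hd3, hsubd⟩
  refine ⟨Prod.swap ⁻¹' Ra 2, ha2, Prod.swap ⁻¹' Rb 3, hb3, Rc 3, hc3, Rd 2, hd2, ?_⟩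
  intro a g h b hgh hT1 hT2 hT3
  have e1 : (DM ops m k ![a, g, h, b], DM ops m k ![a, g, g, b]) ∈ Sa :=
    hsuba (opImg4_pair (diag_mem (mem_principal.1 ha0) a) (diag_mem (mem_principal.1 ha1) g)
      (mem_of_swap_preimage hgh) (diag_mem (mem_principal.1 ha3) b))
  have e2 : (DM ops m k ![a, g, g, b], DM ops m k ![a, g, g, a]) ∈ Sb :=
    hsubb (opImg4_pair (diag_mem (mem_principal.1 hb0) a) (diag_mem (mem_principal.1 hb1) g)
      (diag_mem (mem_principal.1 hb2) g) (mem_of_swap_preimage hT1))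
  rw [hanchor k hk a g] at e2
  have e3 : (DM ops m k ![a, a, a, a], DM ops m k ![a, a, a, b]) ∈ Sc :=
    hsubc (opImg4_pair (diag_mem (mem_principal.1 hc0) a) (diag_mem (mem_principal.1 hc1) a)
      (diag_mem (mem_principal.1 hc2) a) hT2)
  rw [hanchor k hk a a] at e3
  have e4 : (DM ops m k ![a, a, a, b], DM ops m k ![a, a, b, b]) ∈ Sd :=
    hsubd (opImg4_pair (diag_mem (mem_principal.1 hd0) a) (diag_mem (mem_principal.1 hd1) a)
      hT3 (diag_mem (mem_principal.1 hd3) b))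
  refine hsub1 (prod_mk_mem_compRel e1 (hsub2 (prod_mk_mem_compRel e2
    (hsub3 (prod_mk_mem_compRel e3 e4)))))

theorem VH {Y0f Af Y1f Hf : Filter (A × A)} {t' : List (Filter (A × A) × Filter (A × A))}
    {k d : ℕ}
    (hanchor : ∀ i ≤ d, ∀ u v : A, DM ops m i ![u, v, v, u] = u) (hk : k ≤ d)
    {SH : Set (A × A)}
    (hSH : SH ∈ (fComp (o3s ops m k Af)
        (fComp (o4s ops m k Hf) (fComp (o4 ops m k Hf) (o3 ops m k Hf)))) ⊓
      coreComp (fComp (o2s ops m k Y0f) (o3 ops m k Y1f))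
        (t'.map fun p => (o3 ops m k p.1, o3 ops m k p.2))) :
    ∃ pkg : Pkg Y0f Af Y1f Hf t', ∀ a g h b : A, pkg.Pred a g h b →
      (DM ops m k ![a, g, h, b], DM ops m k ![a, a, b, b]) ∈ SH := by
  rcases Filter.mem_inf_iff.1 hSH with ⟨t₁, ht₁, t₂, ht₂, rfl⟩
  rcases VZ ops m hanchor hk ht₁ with ⟨U, hU, T1, hT1, T2, hT2, T3, hT3, imp₁⟩
  rcases VC ops m ht₂ with ⟨V0, hV0, V1, hV1, tl, htl, imp₂⟩
  refine ⟨⟨V0, U, V1, T1, T2, T3, tl, hV0, hU, hV1, hT1, hT2, hT3, htl⟩, ?_⟩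
  rintro a g h b ⟨p0, p1, p2, p3, p4, p5⟩
  exact ⟨imp₁ a g h b p1 p3 p4 p5, imp₂ a g h b p0 p2⟩

end Verif


/-! ### the big lists for the chase -/

section BigList

variable {A : Type*} {ι : Type*} {ar : ι → ℕ}
variable (ops : ∀ i, (Fin (ar i) → A) → A) (m : ℕ → Term ι ar 4)

/-- the "z-anchoring" filter -/
def ZFil (k : ℕ) (Af Hf : Filter (A × A)) : Filter (A × A) :=
  fComp (o3s ops m k Af) (fComp (o4s ops m k Hf) (fComp (o4 ops m k Hf) (o3 ops m k Hf)))

/-- the even-step filter: anchor ⊓ (image core chain) -/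
def HP (k : ℕ) (Y0f Af Y1f Hf : Filter (A × A))
    (t' : List (Filter (A × A) × Filter (A × A))) : Filter (A × A) :=
  ZFil ops m k Af Hf ⊓
    coreComp (fComp (o2s ops m k Y0f) (o3 ops m k Y1f))
      (t'.map fun p => (o3 ops m k p.1, o3 ops m k p.2))

def B1 (k : ℕ) (Y0f Af Y1f Hf : Filter (A × A))
    (t' : List (Filter (A × A) × Filter (A × A))) : Filter (A × A) :=
  if Even k then HP ops m k Y0f Af Y1f Hf t' else o3s ops m k Af

def B2 (k : ℕ) (Y0f Af Y1f Hf : Filter (A × A))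
    (t' : List (Filter (A × A) × Filter (A × A))) : Filter (A × A) :=
  if Even k then Filter.map Prod.swap (HP ops m (k + 1) Y0f Af Y1f Hf t')
  else o3 ops m (k + 1) Af

def BIGl (k : ℕ) (Y0f Af Y1f Hf : Filter (A × A))
    (t' : List (Filter (A × A) × Filter (A × A))) : List (Filter (A × A)) :=
  (List.range k).flatMap fun i =>
    [B1 ops m i Y0f Af Y1f Hf t', B2 ops m i Y0f Af Y1f Hf t']

theorem BIGl_succ (k : ℕ) (Y0f Af Y1f Hf : Filter (A × A))
    (t' : List (Filter (A × A) × Filter (A × A))) :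
    BIGl ops m (k + 1) Y0f Af Y1f Hf t' =
      BIGl ops m k Y0f Af Y1f Hf t' ++
        [B1 ops m k Y0f Af Y1f Hf t', B2 ops m k Y0f Af Y1f Hf t'] := by
  unfold BIGl
  rw [List.range_succ]
  simp [List.flatMap]

end BigList

theorem forall₂_append_split {α' β' : Type*} {R : α' → β' → Prop} :
    ∀ (l₁ : List β') {l₂ : List β'} {ss : List α'}, List.Forall₂ R ss (l₁ ++ l₂) →
      ∃ s₁ s₂, ss = s₁ ++ s₂ ∧ List.Forall₂ R s₁ l₁ ∧ List.Forall₂ R s₂ l₂ := by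
  intro l₁
  induction l₁ with
  | nil =>
      intro l₂ ss h
      exact ⟨[], ss, rfl, List.Forall₂.nil, h⟩
  | cons b r ih =>
      intro l₂ ss h
      rw [List.cons_append] at h
      cases h with
      | cons ha hrest =>
          rename_i a ss'
          rcases ih hrest with ⟨s₁, s₂, rfl, h1, h2⟩
          exact ⟨a :: s₁, s₂, rfl, List.Forall₂.cons ha h1, h2⟩

theorem setListComp_pair {α : Type*} (u v : Set (α × α)) :
    setListComp [u, v] = u ○ v := by
  show u ○ (v ○ setListComp []) = u ○ v
  rw [show setListComp ([] : List (Set (α × α))) = SetRel.id from rfl, compRel_idRel]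


/-! ### the core induction -/

section Core

variable {A : Type*} {ι : Type*} {ar : ι → ℕ}

theorem core (ops : ∀ i, (Fin (ar i) → A) → A) (m : ℕ → Term ι ar 4) (d : ℕ)
    (hday : DayTerms ops m d)
    (x y z : Set (Filter (A × A)))
    (hx : IsSuperUnif x) (hxc : suCompatible ops x)
    (hy : IsSuperUnif y) (hyc : suCompatible ops y)
    (hz : IsSuperUnif z) (hzc : suCompatible ops z)
    (hxz : x ⊆ z) :
    ∀ (n : ℕ) (t : List (Filter (A × A) × Filter (A × A))), t.length ≤ n →
      ∀ Y0 ∈ y, (∀ p ∈ t, p.1 ∈ x ∧ p.2 ∈ y) →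
      ∀ H ∈ z, H ≤ coreComp Y0 t → H ∈ suJoin x (y ∩ z) := by
  obtain ⟨hanchor, hm0, hmd, hmeven, hmodd⟩ := hday
  obtain ⟨⟨-, hxdown, hxsup⟩, hxid, hxswap, hxcomp⟩ := hx
  obtain ⟨⟨-, hydown, hysup⟩, hyid, hyswap, hycomp⟩ := hy
  obtain ⟨⟨-, hzdown, hzsup⟩, hzid, hzswap, hzcomp⟩ := hz
  have hanchor' : ∀ i ≤ d, ∀ u v : A, DM ops m i ![u, v, v, u] = u := hanchor
  intro n
  induction n with
  | zero =>
      intro t hlen Y0 hY0 hmem H hH hle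
      rw [Nat.le_zero, List.length_eq_zero_iff] at hlen
      subst hlen
      exact mem_J_of_mem (Or.inr ⟨hydown Y0 hY0 H hle, hH⟩)
  | succ n ih =>
      intro t hlen Y0 hY0 hmem H hH hle
      rcases t with - | ⟨⟨Afil, Y1⟩, t'⟩
      · exact mem_J_of_mem (Or.inr ⟨hydown Y0 hY0 H hle, hH⟩)
      have hlen' : t'.length ≤ n := by
        simpa using Nat.succ_le_succ_iff.mp (by simpa using hlen)
      have hAf : Afil ∈ x := (hmem _ (List.mem_cons_self)).1
      have hY1 : Y1 ∈ y := (hmem _ (List.mem_cons_self)).2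
      have hmem' : ∀ p ∈ t', p.1 ∈ x ∧ p.2 ∈ y := fun p hp =>
        hmem p (List.mem_cons_of_mem _ hp)
      -- membership facts
      have hx_o3s : ∀ k, o3s ops m k Afil ∈ x := fun k =>
        oFilter_mem ops m hxdown hxid hxc
          (vec4_mem_class hxid hxid (hxswap Afil hAf) hxid) k
      have hx_o3 : ∀ k, o3 ops m k Afil ∈ x := fun k =>
        oFilter_mem ops m hxdown hxid hxc (vec4_mem_class hxid hxid hAf hxid) k
      have hz_ZFil : ∀ k, ZFil ops m k Afil H ∈ z := fun k => by
        refine hzcomp _ (hxz (hx_o3s k)) _ (hzcomp _ ?_ _ (hzcomp _ ?_ _ ?_))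
        · exact oFilter_mem ops m hzdown hzid hzc
            (vec4_mem_class hzid hzid hzid (hzswap H hH)) k
        · exact oFilter_mem ops m hzdown hzid hzc (vec4_mem_class hzid hzid hzid hH) k
        · exact oFilter_mem ops m hzdown hzid hzc (vec4_mem_class hzid hzid hH hzid) k
      have hy_newY0 : ∀ k, fComp (o2s ops m k Y0) (o3 ops m k Y1) ∈ y := fun k => by
        refine hycomp _ ?_ _ ?_
        · exact oFilter_mem ops m hydown hyid hyc
            (vec4_mem_class hyid (hyswap Y0 hY0) hyid hyid) k
        · exact oFilter_mem ops m hydown hyid hyc (vec4_mem_class hyid hyid hY1 hyid) k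
      have hnewt_mem : ∀ k, ∀ p ∈ t'.map fun p => (o3 ops m k p.1, o3 ops m k p.2),
          p.1 ∈ x ∧ p.2 ∈ y := by
        intro k p hp
        rcases List.mem_map.1 hp with ⟨q, hq, rfl⟩
        exact ⟨oFilter_mem ops m hxdown hxid hxc
            (vec4_mem_class hxid hxid (hmem' q hq).1 hxid) k,
          oFilter_mem ops m hydown hyid hyc
            (vec4_mem_class hyid hyid (hmem' q hq).2 hyid) k⟩
      have hHP_z : ∀ k, HP ops m k Y0 Afil Y1 H t' ∈ z := fun k =>
        hzdown _ (hz_ZFil k) _ inf_le_left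
      have hHP_W : ∀ k, HP ops m k Y0 Afil Y1 H t' ∈ suJoin x (y ∩ z) := by
        intro k
        refine ih (t'.map fun p => (o3 ops m k p.1, o3 ops m k p.2))
          (by simpa using hlen') _ (hy_newY0 k) (hnewt_mem k) _ (hHP_z k) inf_le_right
      have hXswap : ∀ K ∈ x ∪ y ∩ z, Filter.map Prod.swap K ∈ x ∪ y ∩ z := by
        rintro K (hK | ⟨hK1, hK2⟩)
        · exact Or.inl (hxswap K hK)
        · exact Or.inr ⟨hyswap K hK1, hzswap K hK2⟩
      have hBIG_mem : ∀ K ∈ BIGl ops m d Y0 Afil Y1 H t', K ∈ suJoin x (y ∩ z) := by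
        intro K hK
        rcases List.mem_flatMap.1 hK with ⟨i, hi, hKi⟩
        by_cases hE : Even i
        · rcases List.mem_cons.1 hKi with rfl | hKi'
          · rw [B1, if_pos hE]
            exact hHP_W i
          · rcases List.mem_cons.1 hKi' with rfl | hKi''
            · rw [B2, if_pos hE]
              exact J_swap hXswap (hHP_W (i + 1))
            · exact absurd hKi'' (List.not_mem_nil)
        · rcases List.mem_cons.1 hKi with rfl | hKi'
          · rw [B1, if_neg hE]
            exact mem_J_of_mem (Or.inl (hx_o3s i))
          · rcases List.mem_cons.1 hKi' with rfl | hKi''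
            · rw [B2, if_neg hE]
              exact mem_J_of_mem (Or.inl (hx_o3 (i + 1)))
            · exact absurd hKi'' (List.not_mem_nil)
      -- the chase
      have chase : ∀ k, k ≤ d → ∀ ss,
          List.Forall₂ (· ∈ ·) ss (BIGl ops m k Y0 Afil Y1 H t') →
          ∃ pkg : Pkg Y0 Afil Y1 H t', ∀ a g h b : A, pkg.Pred a g h b →
            (a, DM ops m k ![a, g, h, b]) ∈ setListComp ss := by
        intro k
        induction k with
        | zero =>
            intro hk ss hss
            have hnil : BIGl ops m 0 Y0 Afil Y1 H t' = [] := rfl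
            rw [hnil] at hss
            cases hss
            refine ⟨Pkg.univPkg, fun a g h b _ => ?_⟩
            exact mem_idRel.2 (show DM ops m 0 ![a, g, h, b] = a from hm0 a g h b).symm
        | succ k ihk =>
            intro hk1 ss hss
            have hklt : k < d := Nat.lt_of_lt_of_le (Nat.lt_succ_self k) hk1
            have hkd : k ≤ d := le_of_lt hklt
            rw [BIGl_succ] at hss
            rcases forall₂_append_split _ hss with ⟨ss₁, ss₂, rfl, hss₁, hss₂⟩
            cases hss₂ with
            | cons hu hrest =>
              rename_i u ss₂'
              cases hrest with
              | cons hv hnil =>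
                rename_i v ss₃
                cases hnil
                rcases ihk hkd ss₁ hss₁ with ⟨pkg₀, imp₀⟩
                by_cases hE : Even k
                · rw [B1, if_pos hE] at hu
                  rw [B2, if_pos hE] at hv
                  rcases VH ops m hanchor' hkd hu with ⟨pkg₁, imp₁⟩
                  have hv' : Prod.swap ⁻¹' v ∈ HP ops m (k + 1) Y0 Afil Y1 H t' := hv
                  rcases VH ops m hanchor' hk1 hv' with ⟨pkg₂, imp₂⟩
                  refine ⟨(pkg₀.inter pkg₁).inter pkg₂, ?_⟩
                  intro a g h b hPred
                  have hP₀ := Pkg.pred_inter_left (Pkg.pred_inter_left hPred)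
                  have hP₁ := Pkg.pred_inter_right (Pkg.pred_inter_left hPred)
                  have hP₂ := Pkg.pred_inter_right hPred
                  have c₀ := imp₀ a g h b hP₀
                  have c₁ := imp₁ a g h b hP₁
                  have c₂ := imp₂ a g h b hP₂
                  have c₂' : (DM ops m (k + 1) ![a, a, b, b],
                      DM ops m (k + 1) ![a, g, h, b]) ∈ v := c₂
                  have heq : DM ops m k ![a, a, b, b] = DM ops m (k + 1) ![a, a, b, b] :=
                    hmeven k hklt hE a b
                  rw [setListComp_append, setListComp_pair]
                  refine prod_mk_mem_compRel c₀ (prod_mk_mem_compRel c₁ ?_)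
                  rw [heq]
                  exact c₂'
                · have hO : Odd k := Nat.not_even_iff_odd.1 hE
                  rw [B1, if_neg hE] at hu
                  rw [B2, if_neg hE] at hv
                  rcases VX ops m hu with ⟨U₁, hU₁, imp₁⟩
                  rcases VX' ops m hv with ⟨U₂, hU₂, imp₂⟩
                  refine ⟨(pkg₀.inter (Pkg.ofUA hU₁)).inter (Pkg.ofUA hU₂), ?_⟩
                  intro a g h b hPred
                  have hP₀ := Pkg.pred_inter_left (Pkg.pred_inter_left hPred)
                  have hgh₁ : (g, h) ∈ U₁ :=
                    (Pkg.pred_inter_right (Pkg.pred_inter_left hPred)).2.1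
                  have hgh₂ : (g, h) ∈ U₂ := (Pkg.pred_inter_right hPred).2.1
                  have c₀ := imp₀ a g h b hP₀
                  have c₁ := imp₁ a g h b hgh₁
                  have c₂ := imp₂ a g h b hgh₂
                  have heq : DM ops m k ![a, g, g, b] = DM ops m (k + 1) ![a, g, g, b] :=
                    hmodd k hklt hO a g b
                  rw [setListComp_append, setListComp_pair]
                  refine prod_mk_mem_compRel c₀ (prod_mk_mem_compRel c₁ ?_)
                  rw [heq]
                  exact c₂
      -- the final bound
      have hle2 : H ≤ filListComp (BIGl ops m d Y0 Afil Y1 H t') := by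
        intro S hS
        rcases mem_filListComp.1 hS with ⟨ss, hss, hsub⟩
        rcases chase d le_rfl ss hss with ⟨pkg, imp⟩
        have hcore : pkg.V0 ○ tailSet ((pkg.UA, pkg.V1) :: pkg.tl) ∈
            coreComp Y0 ((Afil, Y1) :: t') :=
          mem_coreComp.2 ⟨pkg.V0, pkg.hV0, (pkg.UA, pkg.V1) :: pkg.tl,
            List.Forall₂.cons ⟨pkg.hUA, pkg.hV1⟩ pkg.htl, Subset.rfl⟩
        have hT' : pkg.T1 ∩ pkg.T2 ∩ pkg.T3 ∩
            (pkg.V0 ○ tailSet ((pkg.UA, pkg.V1) :: pkg.tl)) ∈ H :=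
          inter_mem (inter_mem (inter_mem pkg.hT1 pkg.hT2) pkg.hT3) (hle hcore)
        refine mem_of_superset hT' ?_
        rintro ⟨a, b⟩ ⟨⟨⟨h1, h2⟩, h3⟩, g, hag, h, hgh, htail⟩
        have hPred : pkg.Pred a g h b := ⟨hag, hgh, htail, h1, h2, h3⟩
        have hc := imp a g h b hPred
        rw [show DM ops m d ![a, g, h, b] = b from hmd a g h b] at hc
        exact hsub hc
      exact J_down (J_listcomp (Or.inl hxid) hBIG_mem) hle2

end Core


/-! ### normalization, padding, and the easy direction -/

theorem listcomp_mem_class {E : Set (Filter (α × α))} (hid : 𝓟 SetRel.id ∈ E)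
    (hcomp : ∀ F ∈ E, ∀ G ∈ E, fComp F G ∈ E) :
    ∀ {l : List (Filter (α × α))}, (∀ K ∈ l, K ∈ E) → filListComp l ∈ E := by
  intro l
  induction l with
  | nil => intro _; exact hid
  | cons F r ih =>
      intro h
      rw [filListComp_cons]
      exact hcomp _ (h F (List.mem_cons_self)) _ (ih fun K hK => h K (List.mem_cons_of_mem _ hK))

theorem finsetSup_mem_class {E : Set (Filter (α × α))}
    (hdown : ∀ F ∈ E, ∀ G ≤ F, G ∈ E) (hid : 𝓟 SetRel.id ∈ E)
    (hsup : ∀ F ∈ E, ∀ G ∈ E, F ⊔ G ∈ E) :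
    ∀ {s : Finset (Filter (α × α))}, (↑s ⊆ E) → s.sup id ∈ E := by
  intro s
  induction s using Finset.induction_on with
  | empty => intro _; exact hdown _ hid _ bot_le
  | insert C s' hni ih =>
      intro h
      rw [Finset.sup_insert]
      refine hsup _ (h (by simp)) _ (ih fun K hK => h ?_)
      simp only [Finset.coe_insert, Set.mem_insert_iff]
      exact Or.inr hK

theorem normalize {x y : Set (Filter (α × α))} (hyid : 𝓟 SetRel.id ∈ y)
    (hycomp : ∀ F ∈ y, ∀ G ∈ y, fComp F G ∈ y) :
    ∀ (l : List (Filter (α × α))), (∀ K ∈ l, K ∈ x ∪ y) →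
    ∃ Y0 ∈ y, ∃ t : List (Filter (α × α) × Filter (α × α)),
      (∀ p ∈ t, p.1 ∈ x ∧ p.2 ∈ y) ∧ filListComp l ≤ coreComp Y0 t := by
  intro l
  induction l with
  | nil => exact fun _ => ⟨𝓟 SetRel.id, hyid, [], by simp, le_rfl⟩
  | cons K r ih =>
      intro h
      rcases ih (fun F hF => h F (List.mem_cons_of_mem _ hF)) with ⟨Y0, hY0, t, hmem, hle⟩
      rcases h K (List.mem_cons_self) with hK | hK
      · refine ⟨𝓟 SetRel.id, hyid, (K, Y0) :: t, ?_, ?_⟩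
        · intro p hp
          rcases List.mem_cons.1 hp with rfl | hp'
          · exact ⟨hK, hY0⟩
          · exact hmem p hp'
        · show filListComp (K :: r) ≤ fComp (𝓟 SetRel.id) (fComp K (coreComp Y0 t))
          rw [fComp_idRel_left, filListComp_cons]
          exact fComp_mono le_rfl hle
      · refine ⟨fComp K Y0, hycomp _ hK _ hY0, t, hmem, ?_⟩
        rw [coreComp_fComp, filListComp_cons]
        exact fComp_mono le_rfl hle

theorem pad_refl_le {l : List (Filter (α × α))} :
    List.Forall₂ (· ≤ ·) l (l.map fun K => K ⊔ 𝓟 SetRel.id) := by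
  induction l with
  | nil => exact List.Forall₂.nil
  | cons F r ih => exact List.Forall₂.cons le_sup_left ih

theorem combine {x y : Set (Filter (α × α))}
    (hxid : 𝓟 SetRel.id ∈ x)
    (hxsup : ∀ F ∈ x, ∀ G ∈ x, F ⊔ G ∈ x) (hyid : 𝓟 SetRel.id ∈ y)
    (hysup : ∀ F ∈ y, ∀ G ∈ y, F ⊔ G ∈ y) :
    ∀ (s : Finset (Filter (α × α))), ↑s ⊆ filComps (x ∪ y) →
    ∃ l : List (Filter (α × α)), (∀ K ∈ l, K ∈ x ∪ y) ∧ (∀ K ∈ l, 𝓟 SetRel.id ≤ K) ∧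
      s.sup id ≤ filListComp l := by
  intro s
  induction s using Finset.induction_on with
  | empty => exact fun _ => ⟨[], by simp, by simp, bot_le⟩
  | insert C s' hni ih =>
      intro h
      have hsub' : ↑s' ⊆ filComps (x ∪ y) := by
        intro K hK
        refine h ?_
        simp only [Finset.coe_insert, Set.mem_insert_iff]
        exact Or.inr hK
      rcases ih hsub' with ⟨l₂, hmem₂, hrefl₂, hle₂⟩
      have hC : C ∈ filComps (x ∪ y) := h (by simp)
      rcases hC with ⟨l₁, hl₁ne, hl₁mem, rfl⟩
      set l₁' := l₁.map fun K => K ⊔ 𝓟 SetRel.id with hl₁'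
      have hmem₁ : ∀ K ∈ l₁', K ∈ x ∪ y := by
        intro K hK
        rcases List.mem_map.1 hK with ⟨F, hF, rfl⟩
        rcases hl₁mem F hF with hF' | hF'
        · exact Or.inl (hxsup _ hF' _ hxid)
        · exact Or.inr (hysup _ hF' _ hyid)
      have hrefl₁ : ∀ K ∈ l₁', 𝓟 SetRel.id ≤ K := by
        intro K hK
        rcases List.mem_map.1 hK with ⟨F, hF, rfl⟩
        exact le_sup_right
      refine ⟨l₁' ++ l₂, ?_, ?_, ?_⟩
      · intro K hK
        rcases List.mem_append.1 hK with h' | h'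
        · exact hmem₁ K h'
        · exact hmem₂ K h'
      · intro K hK
        rcases List.mem_append.1 hK with h' | h'
        · exact hrefl₁ K h'
        · exact hrefl₂ K h'
      · rw [Finset.sup_insert, filListComp_append]
        have h1 : filListComp l₁ ≤ filListComp l₁' := filListComp_mono pad_refl_le
        have h2 : id (filListComp l₁) ⊔ s'.sup id ≤ filListComp l₁' ⊔ filListComp l₂ :=
          sup_le_sup h1 hle₂
        refine h2.trans (sup_le_fComp (refl_filListComp hrefl₁) (refl_filListComp hrefl₂))


end S19

theorem stmt19 (ops : ∀ i, (Fin (ar i) → A) → A) (m : ℕ → Term ι ar 4) (d : ℕ)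
    (hday : DayTerms ops m d)
    (x y z : Set (Filter (A × A)))
    (hx : IsSuperUnif x) (hxc : suCompatible ops x)
    (hy : IsSuperUnif y) (hyc : suCompatible ops y)
    (hz : IsSuperUnif z) (hzc : suCompatible ops z)
    (hxz : x ⊆ z) :
    suJoin x (y ∩ z) = suJoin x y ∩ z := by
  apply Set.Subset.antisymm
  · intro H hH
    constructor
    · rcases hH with ⟨s, hs, hle⟩
      refine ⟨s, ?_, hle⟩
      intro C hC
      rcases hs hC with ⟨l, hlne, hlmem, rfl⟩
      refine ⟨l, hlne, ?_, rfl⟩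
      intro F hF
      rcases hlmem F hF with h | h
      · exact Or.inl h
      · exact Or.inr h.1
    · rcases hH with ⟨s, hs, hle⟩
      refine hz.1.2.1 _ ?_ _ hle
      refine S19.finsetSup_mem_class hz.1.2.1 hz.2.1 hz.1.2.2 ?_
      intro C hC
      rcases hs hC with ⟨l, hlne, hlmem, rfl⟩
      refine S19.listcomp_mem_class hz.2.1 hz.2.2.2 ?_
      intro K hK
      rcases hlmem K hK with h | h
      · exact hxz h
      · exact h.2
  · rintro H ⟨⟨s, hs, hle⟩, hHz⟩
    rcases S19.combine hx.2.1 hx.1.2.2 hy.2.1 hy.1.2.2 s hs with ⟨l, hlmem, hlrefl, hle2⟩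
    rcases S19.normalize hy.2.1 hy.2.2.2 l hlmem with ⟨Y0, hY0, t, htmem, hle3⟩
    exact S19.core ops m d hday x y z hx hxc hy hyc hz hzc hxz t.length t le_rfl Y0 hY0
      htmem H hHz (hle.trans (hle2.trans hle3))
end
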